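/- arXiv:0909.1902 — 5 statements merged into one kernel-verified Lean document; each statement's English description precedes it below -/
import Mathlib

section
/- Let I ⊆ ℂ[z₁,…,z_m] be an ideal, w₀ ∈ ℂ^m, and J = 𝔪_{w₀} I where 𝔪_{w₀} is the maximal ideal at w₀. For w ≠ w₀, the characteristic spaces coincide: V_w(J) = V_w(I), where V_w(F) = {q ∈ ℂ[z] : q(D)f|_w = 0 for all f ∈ F}. -/
open MvPolynomial

/-- The Wirtinger partial derivative `∂f/∂z_i` of a function of `m` complex variables. -/
noncomputable def pderivFun {m : ℕ} (i : Fin m) (f : (Fin m → ℂ) → ℂ) : (Fin m → ℂ) → ℂ :=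
  fun z => fderiv ℂ f z (Pi.single i 1)

/-- The iterated derivative `∂^α f` for a multi-index `α`. -/
noncomputable def mderiv {m : ℕ} (α : Fin m → ℕ) (f : (Fin m → ℂ) → ℂ) : (Fin m → ℂ) → ℂ :=
  (List.finRange m).foldr (fun i g => (pderivFun i)^[α i] g) f

/-- The constant-coefficient differential operator `q(D) = Σ a_α ∂^α` associated to the
polynomial `q = Σ a_α z^α`. -/
noncomputable def applyDiff {m : ℕ} (q : MvPolynomial (Fin m) ℂ)
    (f : (Fin m → ℂ) → ℂ) : (Fin m → ℂ) → ℂ :=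
  fun z => ∑ α ∈ q.support, q.coeff α * mderiv (fun i => α i) f z

/-- The characteristic space at `w` of an ideal `I`:
`V_w(I) = {q : q(D)f|_w = 0 for all f ∈ I}`. -/
def charSpaceI {m : ℕ} (w : Fin m → ℂ) (I : Ideal (MvPolynomial (Fin m) ℂ)) :
    Set (MvPolynomial (Fin m) ℂ) :=
  {q | ∀ p ∈ I, applyDiff q (fun z => MvPolynomial.eval z p) w = 0}

/-! ### Auxiliary material -/

noncomputable def Lc {m : ℕ} (c : Fin m → ℂ) : (Fin m → ℂ) →L[ℂ] ℂ where
  toFun v := ∑ i, c i * v i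
  map_add' a b := by simp [mul_add, Finset.sum_add_distrib]
  map_smul' r v := by simp [Finset.mul_sum, mul_left_comm]
  cont := by
    show Continuous fun v : Fin m → ℂ => ∑ i, c i * v i
    exact continuous_finset_sum _ fun i _ => continuous_const.mul (continuous_apply i)

@[simp] lemma Lc_apply {m : ℕ} (c v : Fin m → ℂ) : Lc c v = ∑ i, c i * v i := rfl

lemma hasFDerivAt_eval {m : ℕ} (p : MvPolynomial (Fin m) ℂ) (z : Fin m → ℂ) :
    HasFDerivAt (fun z : Fin m → ℂ => eval z p)
      (Lc (fun i => eval z (pderiv i p))) z := by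
  induction p using MvPolynomial.induction_on with
  | C a =>
      have h0 : Lc (fun i : Fin m => eval z (pderiv i (C a))) = 0 := by
        ext v; simp [pderiv_C]
      rw [h0]
      simp only [eval_C]
      exact hasFDerivAt_const (𝕜 := ℂ) a z
  | add p q hp hq =>
      have h : HasFDerivAt (fun y => eval y p + eval y q) _ z := hp.add hq
      convert h using 1 <;> try with_reducible_and_instances rfl
      · funext y; simp
      · ext v; simp [Finset.sum_add_distrib, add_mul]
  | mul_X p i hp =>
      have hX := (ContinuousLinearMap.proj i : (Fin m → ℂ) →L[ℂ] ℂ).hasFDerivAt (x := z)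
      have h2 := hp.mul' hX
      convert h2 using 1 <;> try with_reducible_and_instances rfl
      · funext y; simp
      · classical
        ext v
        simp only [Lc_apply, pderiv_mul, pderiv_X, eval_add, eval_mul, eval_X,
          Pi.single_apply, ContinuousLinearMap.add_apply, ContinuousLinearMap.smulRight_apply,
          ContinuousLinearMap.smul_apply, ContinuousLinearMap.proj_apply, smul_eq_mul,
          apply_ite (eval z), map_zero, mul_ite, ite_mul, mul_one, mul_zero, zero_mul,
          add_mul, Finset.sum_add_distrib, Finset.sum_ite_eq, Finset.mem_univ, if_true,
          Finset.sum_mul, op_smul_eq_mul]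
        rw [add_comm]
        congr 1
        exact Finset.sum_congr rfl fun j _ => by ring

lemma pderivFun_eval {m : ℕ} (i : Fin m) (p : MvPolynomial (Fin m) ℂ) :
    pderivFun i (fun z => eval z p) = fun z => eval z (pderiv i p) := by
  funext z
  show fderiv ℂ (fun z => eval z p) z (Pi.single i 1) = _
  rw [(hasFDerivAt_eval p z).fderiv]
  classical
  simp [Pi.single_apply, mul_ite, Finset.sum_ite_eq']

lemma iter_pderivFun_eval {m : ℕ} (i : Fin m) (n : ℕ) (p : MvPolynomial (Fin m) ℂ) :
    (pderivFun i)^[n] (fun z => eval z p) = fun z => eval z ((⇑(pderiv i))^[n] p) := by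
  induction n generalizing p with
  | zero => rfl
  | succ n ih =>
      rw [Function.iterate_succ_apply, Function.iterate_succ_apply, pderivFun_eval, ih]

/-- The algebraic version of `mderiv`. -/
noncomputable def Diter {m : ℕ} (α : Fin m → ℕ) (p : MvPolynomial (Fin m) ℂ) :
    MvPolynomial (Fin m) ℂ :=
  (List.finRange m).foldr (fun i q => (⇑(pderiv i))^[α i] q) p

lemma foldr_eval {m : ℕ} (l : List (Fin m)) (α : Fin m → ℕ) (p : MvPolynomial (Fin m) ℂ) :
    l.foldr (fun i g => (pderivFun i)^[α i] g) (fun z => eval z p)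
      = fun z => eval z (l.foldr (fun i q => (⇑(pderiv i))^[α i] q) p) := by
  induction l with
  | nil => rfl
  | cons i t ih => rw [List.foldr_cons, List.foldr_cons, ih, iter_pderivFun_eval]

lemma mderiv_eval {m : ℕ} (α : Fin m → ℕ) (p : MvPolynomial (Fin m) ℂ) :
    mderiv α (fun z => eval z p) = fun z => eval z (Diter α p) :=
  foldr_eval _ α p

/-- The scalar pairing `⟨q, p⟩_w = (q(D)p)(w)`. -/
noncomputable def pairW {m : ℕ} (w : Fin m → ℂ) (q p : MvPolynomial (Fin m) ℂ) : ℂ :=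
  ∑ α ∈ q.support, q.coeff α * eval w (Diter (fun i => α i) p)

lemma applyDiff_eval {m : ℕ} (w : Fin m → ℂ) (q p : MvPolynomial (Fin m) ℂ) :
    applyDiff q (fun z => eval z p) w = pairW w q p := by
  unfold applyDiff pairW
  exact Finset.sum_congr rfl fun α _ => by rw [mderiv_eval]

lemma pairW_eq_sum {m : ℕ} (w : Fin m → ℂ) (q p : MvPolynomial (Fin m) ℂ) :
    pairW w q p = Finsupp.sum (AddMonoidAlgebra.coeff q) (fun α a => a * eval w (Diter (fun i => α i) p)) :=
  by unfold pairW; rw [sum_def]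

lemma pairW_add_left {m : ℕ} (w : Fin m → ℂ) (q₁ q₂ p : MvPolynomial (Fin m) ℂ) :
    pairW w (q₁ + q₂) p = pairW w q₁ p + pairW w q₂ p := by
  simp only [pairW_eq_sum, AddMonoidAlgebra.coeff_add]
  exact Finsupp.sum_add_index' (fun α => by simp) (fun α a b => by ring)

lemma pairW_monomial {m : ℕ} (w : Fin m → ℂ) (β : Fin m →₀ ℕ) (a : ℂ)
    (p : MvPolynomial (Fin m) ℂ) :
    pairW w (monomial β a) p = a * eval w (Diter (fun i => β i) p) := by
  rw [pairW_eq_sum, ← single_eq_monomial, AddMonoidAlgebra.coeff_single]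
  exact Finsupp.sum_single_index (by simp)

lemma pairW_zero {m : ℕ} (w : Fin m → ℂ) (p : MvPolynomial (Fin m) ℂ) :
    pairW w 0 p = 0 := by
  simp [pairW]

/-! Commutation lemmas for iterated partial derivatives. -/

lemma iter_pderiv_add {m : ℕ} (i : Fin m) (n : ℕ) (a b : MvPolynomial (Fin m) ℂ) :
    (⇑(pderiv i))^[n] (a + b) = (⇑(pderiv i))^[n] a + (⇑(pderiv i))^[n] b := by
  induction n generalizing a b with
  | zero => rfl
  | succ n ih => simp only [Function.iterate_succ_apply, map_add, ih]

lemma iter_pderiv_C_mul {m : ℕ} (i : Fin m) (n : ℕ) (a : ℂ) (p : MvPolynomial (Fin m) ℂ) :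
    (⇑(pderiv i))^[n] (C a * p) = C a * (⇑(pderiv i))^[n] p := by
  induction n generalizing p with
  | zero => rfl
  | succ n ih => simp only [Function.iterate_succ_apply, pderiv_C_mul, ih]

lemma pderiv_linear_mul {m : ℕ} {i j : Fin m} (h : i ≠ j) (c : ℂ)
    (p : MvPolynomial (Fin m) ℂ) :
    pderiv i ((X j - C c) * p) = (X j - C c) * pderiv i p := by
  rw [pderiv_mul, map_sub, pderiv_C, pderiv_X_of_ne (Ne.symm h), sub_zero, zero_mul, zero_add]

lemma iter_pderiv_linear_mul {m : ℕ} {i j : Fin m} (h : i ≠ j) (c : ℂ) (n : ℕ)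
    (p : MvPolynomial (Fin m) ℂ) :
    (⇑(pderiv i))^[n] ((X j - C c) * p) = (X j - C c) * (⇑(pderiv i))^[n] p := by
  induction n generalizing p with
  | zero => rfl
  | succ n ih => simp only [Function.iterate_succ_apply, pderiv_linear_mul h, ih]

lemma iter_pderiv_self_linear_mul {m : ℕ} (j : Fin m) (c : ℂ) (n : ℕ)
    (p : MvPolynomial (Fin m) ℂ) :
    (⇑(pderiv j))^[n + 1] ((X j - C c) * p)
      = (X j - C c) * (⇑(pderiv j))^[n + 1] p + C ((n : ℂ) + 1) * (⇑(pderiv j))^[n] p := by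
  induction n generalizing p with
  | zero =>
      simp only [zero_add, Function.iterate_one, Function.iterate_zero, id_eq, Nat.cast_zero,
        zero_add, map_one, one_mul]
      rw [pderiv_mul, map_sub, pderiv_C, pderiv_X_self, sub_zero, one_mul]
      ring
  | succ n ih =>
      rw [Function.iterate_succ_apply, pderiv_mul, map_sub, pderiv_C, pderiv_X_self, sub_zero,
        one_mul, iter_pderiv_add, ih, ← Function.iterate_succ_apply,
        ← Function.iterate_succ_apply]
      simp only [Nat.cast_add, Nat.cast_one, map_add, map_one]
      ring

lemma foldr_congr {m : ℕ} (l : List (Fin m)) (α β : Fin m → ℕ)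
    (h : ∀ i ∈ l, α i = β i) (p : MvPolynomial (Fin m) ℂ) :
    l.foldr (fun i q => (⇑(pderiv i))^[α i] q) p
      = l.foldr (fun i q => (⇑(pderiv i))^[β i] q) p := by
  induction l with
  | nil => rfl
  | cons i t ih =>
      rw [List.foldr_cons, List.foldr_cons, ih (fun i hi => h i (List.mem_cons_of_mem _ hi)),
        h i (List.mem_cons_self (a := i) (l := t))]

lemma foldr_linear_mul_notmem {m : ℕ} (l : List (Fin m)) {j : Fin m} (hj : j ∉ l)
    (α : Fin m → ℕ) (c : ℂ) (p : MvPolynomial (Fin m) ℂ) :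
    l.foldr (fun i q => (⇑(pderiv i))^[α i] q) ((X j - C c) * p)
      = (X j - C c) * l.foldr (fun i q => (⇑(pderiv i))^[α i] q) p := by
  induction l with
  | nil => rfl
  | cons i t ih =>
      have hij : i ≠ j := fun h => hj (h ▸ List.mem_cons_self (a := i) (l := t))
      rw [List.foldr_cons, List.foldr_cons, ih (fun h => hj (List.mem_cons_of_mem _ h)),
        iter_pderiv_linear_mul hij]

lemma foldr_linear_mul {m : ℕ} (l : List (Fin m)) (hl : l.Nodup) {j : Fin m} (hj : j ∈ l)
    (α : Fin m → ℕ) (c : ℂ) (p : MvPolynomial (Fin m) ℂ) :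
    l.foldr (fun i q => (⇑(pderiv i))^[α i] q) ((X j - C c) * p)
      = (X j - C c) * l.foldr (fun i q => (⇑(pderiv i))^[α i] q) p
        + C ((α j : ℕ) : ℂ) *
          l.foldr (fun i q => (⇑(pderiv i))^[Function.update α j (α j - 1) i] q) p := by
  induction l with
  | nil => exact absurd hj (List.not_mem_nil)
  | cons i t ih =>
      have hnd := List.nodup_cons.mp hl
      by_cases hij : i = j
      · subst hij
        have hjt : i ∉ t := hnd.1
        rw [List.foldr_cons, List.foldr_cons, List.foldr_cons,
          foldr_linear_mul_notmem t hjt]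
        have hcongr : t.foldr (fun k q => (⇑(pderiv k))^[Function.update α i (α i - 1) k] q) p
            = t.foldr (fun k q => (⇑(pderiv k))^[α k] q) p :=
          foldr_congr t _ _ (fun k hk => by
            rw [Function.update_of_ne (fun h : k = i => hjt (h ▸ hk)) _ α]) p
        rw [hcongr, Function.update_self]
        rcases Nat.eq_zero_or_pos (α i) with h0 | hpos
        · rw [h0]
          simp
        · obtain ⟨n, hn⟩ : ∃ n, α i = n + 1 := ⟨α i - 1, (Nat.succ_pred_eq_of_pos hpos).symm⟩
          rw [hn]
          rw [iter_pderiv_self_linear_mul]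
          norm_num
      · have hjt : j ∈ t := by
          rcases List.mem_cons.mp hj with h | h
          · exact absurd h.symm hij
          · exact h
        rw [List.foldr_cons, List.foldr_cons, List.foldr_cons,
          ih hnd.2 hjt, iter_pderiv_add, iter_pderiv_linear_mul hij, iter_pderiv_C_mul,
          Function.update_of_ne hij]

lemma Diter_linear_mul {m : ℕ} (α : Fin m → ℕ) (j : Fin m) (c : ℂ)
    (p : MvPolynomial (Fin m) ℂ) :
    Diter α ((X j - C c) * p)
      = (X j - C c) * Diter α p
        + C ((α j : ℕ) : ℂ) * Diter (Function.update α j (α j - 1)) p :=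
  foldr_linear_mul _ (List.nodup_finRange m) (List.mem_finRange j) α c p

lemma pairW_linear_mul {m : ℕ} (w : Fin m → ℂ) (q : MvPolynomial (Fin m) ℂ) (j : Fin m)
    (c : ℂ) (p : MvPolynomial (Fin m) ℂ) :
    pairW w q ((X j - C c) * p)
      = (w j - c) * pairW w q p + pairW w (pderiv j q) p := by
  induction q using MvPolynomial.induction_on' with
  | add q₁ q₂ h1 h2 =>
      rw [map_add, pairW_add_left, pairW_add_left, pairW_add_left, h1, h2]
      ring
  | monomial β a =>
      rw [pairW_monomial, pairW_monomial, pderiv_monomial, pairW_monomial]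
      have hfun : (fun i => (β - Finsupp.single j 1 : Fin m →₀ ℕ) i)
          = Function.update (fun i => β i) j (β j - 1) := by
        funext i
        by_cases h : i = j
        · subst h; simp [Finsupp.tsub_apply, Finsupp.single_apply]
        · simp [Function.update_of_ne h, Finsupp.tsub_apply, Finsupp.single_apply, Ne.symm h]
      rw [Diter_linear_mul, hfun]
      simp only [eval_add, eval_mul, eval_sub, eval_X, eval_C]
      ring

lemma totalDegree_pderiv_lt {m : ℕ} {q : MvPolynomial (Fin m) ℂ} {j : Fin m}
    (h : pderiv j q ≠ 0) : (pderiv j q).totalDegree < q.totalDegree := by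
  have hrep : pderiv j q
      = ∑ α ∈ q.support, monomial (α - Finsupp.single j 1) (q.coeff α * (α j : ℂ)) := by
    conv_lhs => rw [q.as_sum, map_sum]
    exact Finset.sum_congr rfl fun α _ => by rw [pderiv_monomial]
  have hd : 1 ≤ q.totalDegree := by
    by_contra hd
    push_neg at hd
    have h0 : q.totalDegree = 0 := Nat.lt_one_iff.mp hd
    apply h
    rw [hrep]
    refine Finset.sum_eq_zero fun α hα => ?_
    have := (totalDegree_eq_zero_iff (Fin m) q).mp h0 α hα j
    simp [this]
  refine lt_of_le_of_lt ?_ (Nat.sub_lt (lt_of_lt_of_le Nat.zero_lt_one hd) Nat.zero_lt_one)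
  rw [hrep]
  refine MvPolynomial.totalDegree_finsetSum_le fun α hα => ?_
  by_cases hz : α j = 0
  · have : (α j : ℂ) = 0 := by rw [hz]; exact Nat.cast_zero
    simp [this]
  · refine le_trans (totalDegree_monomial_le _ _) ?_
    have hsum : (α - Finsupp.single j 1).sum (fun _ n => n) + 1 = α.sum (fun _ n => n) := by
      have hrec : (α - Finsupp.single j 1) + Finsupp.single j 1 = α := by
        ext i
        by_cases hij : i = j
        · subst hij
          simp only [Finsupp.add_apply, Finsupp.tsub_apply, Finsupp.single_eq_same]
          omega
        · simp [Finsupp.single_apply, Ne.symm hij, hij]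
      calc (α - Finsupp.single j 1).sum (fun _ n => n) + 1
          = (α - Finsupp.single j 1).sum (fun _ n => n)
            + (Finsupp.single j 1).sum (fun _ n => n) := by
            rw [Finsupp.sum_single_index]; rfl
        _ = α.sum fun _ n => n := by
            rw [← Finsupp.sum_add_index' (fun _ => rfl) (fun _ a b => rfl), hrec]
      
    have hle : α.sum (fun _ n => n) ≤ q.totalDegree := le_totalDegree hα
    have : (α - Finsupp.single j 1).sum (fun _ n => id n) ≤ q.totalDegree - 1 := by
      simp only [id]
      omega
    exact this


/-- For an ideal `I ⊆ ℂ[z₁,…,z_m]`, a point `w₀`, and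
`J = 𝔪_{w₀} I`, the characteristic spaces at any point `w ≠ w₀` coincide:
`V_w(J) = V_w(I)`. -/
theorem stmt5 {m : ℕ} (I : Ideal (MvPolynomial (Fin m) ℂ)) (w₀ w : Fin m → ℂ)
    (hw : w ≠ w₀) :
    charSpaceI w (RingHom.ker (MvPolynomial.eval w₀ :
        MvPolynomial (Fin m) ℂ →+* ℂ) * I) =
      charSpaceI w I := by
  set K := RingHom.ker (MvPolynomial.eval w₀ : MvPolynomial (Fin m) ℂ →+* ℂ)
  obtain ⟨j, hj⟩ := Function.ne_iff.mp hw
  have hwj : w j - w₀ j ≠ 0 := sub_ne_zero_of_ne hj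
  have hXj : (X j - C (w₀ j) : MvPolynomial (Fin m) ℂ) ∈ K := by
    simp [K, RingHom.mem_ker]
  ext q
  constructor
  · intro hq p hp
    rw [applyDiff_eval]
    -- strong induction on degree
    have key : ∀ n : ℕ, ∀ q : MvPolynomial (Fin m) ℂ, q.totalDegree ≤ n →
        (∀ g ∈ K * I, pairW w q g = 0) → ∀ p ∈ I, pairW w q p = 0 := by
      intro n
      induction n with
      | zero =>
          intro q hdeg hqJ p hp
          have hpd : pderiv j q = 0 := by
            by_contra hne
            exact absurd (lt_of_lt_of_le (totalDegree_pderiv_lt hne) hdeg) (Nat.not_lt_zero _)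
          have hmem : (X j - C (w₀ j)) * p ∈ K * I := Ideal.mul_mem_mul hXj hp
          have h0 := hqJ _ hmem
          rw [pairW_linear_mul, hpd, pairW_zero, add_zero] at h0
          exact (mul_eq_zero.mp h0).resolve_left hwj
      | succ n ih =>
          intro q hdeg hqJ p hp
          by_cases hpd : pderiv j q = 0
          · have hmem : (X j - C (w₀ j)) * p ∈ K * I := Ideal.mul_mem_mul hXj hp
            have h0 := hqJ _ hmem
            rw [pairW_linear_mul, hpd, pairW_zero, add_zero] at h0
            exact (mul_eq_zero.mp h0).resolve_left hwj
          · have hdq : (pderiv j q).totalDegree ≤ n :=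
              Nat.lt_succ_iff.mp (lt_of_lt_of_le (totalDegree_pderiv_lt hpd) hdeg)
            have hdqJ : ∀ g ∈ K * I, pairW w (pderiv j q) g = 0 := by
              intro g hg
              have hmem : (X j - C (w₀ j)) * g ∈ K * I :=
                Ideal.mul_mem_left _ _ hg
              have h0 := hqJ _ hmem
              rw [pairW_linear_mul, hqJ g hg, mul_zero, zero_add] at h0
              exact h0
            have hpdq := ih (pderiv j q) hdq hdqJ p hp
            have hmem : (X j - C (w₀ j)) * p ∈ K * I := Ideal.mul_mem_mul hXj hp
            have h0 := hqJ _ hmem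
            rw [pairW_linear_mul, hpdq, add_zero] at h0
            exact (mul_eq_zero.mp h0).resolve_left hwj
    refine key q.totalDegree q le_rfl ?_ p hp
    intro g hg
    rw [← applyDiff_eval]
    exact hq g hg
  · intro hq p hp
    exact hq p (Ideal.mul_le_right hp)
end

section
/- Let M be a reproducing kernel Hilbert space of holomorphic functions on Ω with orthonormal basis {e_n}, reproducing kernel K. For any closed polydisk Δ̄(0;r) ⊂ Ω, the series Σ_n ‖e_n‖²_{Δ̄(0;r)} of squared sup-norms converges. (This follows from the sup–L² estimate and the fact that G(z) = Σ_n |e_n(z)|² = K(z,z) is finite and continuous on Δ̄(0;r), together with monotone convergence.) -/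
open MeasureTheory

/-- The closed polydisk of polyradius `r` centered at `0` in `ℂ^m`. -/
def closedPolydisk (m : ℕ) (r : ℝ) : Set (Fin m → ℂ) := {z | ∀ i, ‖z i‖ ≤ r}


open MeasureTheory Set Metric Complex intervalIntegral
open scoped Real ENNReal NNReal

/-- Circle sub-mean value inequality for `‖g‖²`. -/
lemma circle_submean {g : ℂ → ℂ} {V : Set ℂ} (hV : IsOpen V)
    (hg : DifferentiableOn ℂ g V) {c : ℂ} {ρ : ℝ} (hρ : 0 < ρ)
    (hsub : Metric.closedBall c ρ ⊆ V) :
    ENNReal.ofReal (2 * Real.pi) * ((‖g c‖₊ : ℝ≥0∞))^2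
      ≤ ∫⁻ θ in Set.Ioo (-Real.pi) Real.pi, ((‖g (circleMap c ρ θ)‖₊ : ℝ≥0∞))^2 := by
  set h : ℂ → ℂ := fun z => g z * g z with hh
  have hballV : Metric.ball c ρ ⊆ V := (Metric.ball_subset_closedBall).trans hsub
  have hcont : ContinuousOn h (Metric.closedBall c ρ) :=
    ((hg.continuousOn.mono hsub).mul (hg.continuousOn.mono hsub))
  have hdiff : ∀ z ∈ Metric.ball c ρ \ (∅ : Set ℂ), DifferentiableAt ℂ h z := by
    intro z hz
    have hzV : z ∈ V := hballV hz.1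
    have := (hg.differentiableAt (hV.mem_nhds hzV))
    exact this.mul this
  have key := Complex.circleIntegral_sub_center_inv_smul_of_differentiable_on_off_countable
      hρ Set.countable_empty hcont hdiff
  -- unfold the circle integral into an interval integral
  have hne : ∀ θ : ℝ, circleMap 0 ρ θ ≠ 0 := fun θ => by
    simpa using circleMap_ne_center (c := (0:ℂ)) hρ.ne' (θ := θ)
  have key2 : (∫ θ in (0:ℝ)..(2*Real.pi), h (circleMap c ρ θ)) = (2 * Real.pi : ℝ) • h c := by
    have : (∮ z in C(c, ρ), (z - c)⁻¹ • h z)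
        = ∫ θ in (0:ℝ)..(2*Real.pi), Complex.I • h (circleMap c ρ θ) := by
      simp only [circleIntegral, deriv_circleMap, circleMap_sub_center, smul_eq_mul]
      congr 1
      funext θ
      field_simp [hne θ]
    rw [this] at key
    rw [intervalIntegral.integral_smul] at key
    have hI : (Complex.I) ≠ 0 := Complex.I_ne_zero
    rw [smul_eq_mul] at key
    have : (Complex.I) * (∫ θ in (0:ℝ)..(2*Real.pi), h (circleMap c ρ θ))
        = Complex.I * ((2 * Real.pi : ℂ) * h c) := by rw [key]; simp only [smul_eq_mul]; ring
    have h2 := mul_left_cancel₀ hI this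
    rw [h2, Complex.real_smul]
    push_cast
    ring
  set F : ℝ → ℝ := fun θ => ‖g (circleMap c ρ θ)‖^2 with hF
  have hgc : ∀ θ : ℝ, circleMap c ρ θ ∈ V := fun θ =>
    hsub (circleMap_mem_closedBall c hρ.le θ)
  have hFcont : Continuous F := by
    rw [← continuousOn_univ]
    exact ((hg.continuousOn.comp (continuous_circleMap c ρ).continuousOn
      (fun θ _ => hgc θ)).norm.pow 2)
  have hper : Function.Periodic F (2*Real.pi) := fun θ => by
    simp only [hF, periodic_circleMap c ρ θ]
  have hnorm : 2 * Real.pi * ‖g c‖^2 ≤ ∫ θ in (-Real.pi)..Real.pi, F θ := by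
    have h1 : ‖(2 * Real.pi : ℝ) • h c‖ = 2*Real.pi * ‖g c‖^2 := by
      rw [norm_smul, hh]
      simp only [norm_mul, Real.norm_eq_abs, abs_of_pos Real.pi_pos,
        abs_of_pos (by norm_num : (0:ℝ) < 2)]
      ring
    have h2 : (∫ θ in (-Real.pi)..Real.pi, F θ) = ∫ θ in (0:ℝ)..(2*Real.pi), F θ := by
      have := hper.intervalIntegral_add_eq (-Real.pi) 0
      rw [zero_add] at this
      rw [show -Real.pi + 2*Real.pi = Real.pi by ring] at this
      exact this
    rw [h2]
    calc 2 * Real.pi * ‖g c‖^2 = ‖(2 * Real.pi : ℝ) • h c‖ := h1.symm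
      _ = ‖∫ θ in (0:ℝ)..(2*Real.pi), h (circleMap c ρ θ)‖ := by rw [key2]
      _ ≤ ∫ θ in (0:ℝ)..(2*Real.pi), ‖h (circleMap c ρ θ)‖ :=
          intervalIntegral.norm_integral_le_integral_norm (by positivity)
      _ = ∫ θ in (0:ℝ)..(2*Real.pi), F θ := by
          apply intervalIntegral.integral_congr
          intro θ _
          simp [hh, hF, norm_mul, sq]
  have hofr : ∀ x : ℂ, ENNReal.ofReal (‖x‖^2) = ((‖x‖₊ : ℝ≥0∞))^2 := fun x => by
    rw [ENNReal.ofReal_pow (norm_nonneg _), ofReal_norm, enorm_eq_nnnorm]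
  calc ENNReal.ofReal (2 * Real.pi) * ((‖g c‖₊ : ℝ≥0∞))^2
      = ENNReal.ofReal (2 * Real.pi * ‖g c‖^2) := by
        rw [← hofr (g c), ← ENNReal.ofReal_mul (by positivity)]
    _ ≤ ENNReal.ofReal (∫ θ in (-Real.pi)..Real.pi, F θ) := ENNReal.ofReal_le_ofReal hnorm
    _ = ∫⁻ θ in Set.Ioc (-Real.pi) Real.pi, ENNReal.ofReal (F θ) := by
        rw [intervalIntegral.integral_of_le (by linarith [Real.pi_pos])]
        exact ofReal_integral_eq_lintegral_ofReal (hFcont.integrableOn_Ioc)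
          (Filter.Eventually.of_forall fun θ => by positivity)
    _ = ∫⁻ θ in Set.Ioo (-Real.pi) Real.pi, ENNReal.ofReal (F θ) := by
        rw [Measure.restrict_congr_set Ioo_ae_eq_Ioc]
    _ = ∫⁻ θ in Set.Ioo (-Real.pi) Real.pi, ((‖g (circleMap c ρ θ)‖₊ : ℝ≥0∞))^2 :=
        lintegral_congr fun θ => hofr _

lemma circleMap_eq_polar (c : ℂ) (p : ℝ × ℝ) :
    circleMap c p.1 p.2 = c + Complex.polarCoord.symm p := by
  rw [Complex.polarCoord_symm_apply, circleMap, Complex.exp_mul_I]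
  push_cast
  ring

/-- Area sub-mean value inequality for `‖g‖²` on a closed disk. -/
lemma disk_submean {g : ℂ → ℂ} {V : Set ℂ} (hV : IsOpen V)
    (hg : DifferentiableOn ℂ g V) {c : ℂ} {δ : ℝ} (hδ : 0 < δ)
    (hsub : Metric.closedBall c δ ⊆ V) :
    ENNReal.ofReal (Real.pi * δ^2) * ((‖g c‖₊ : ℝ≥0∞))^2
      ≤ ∫⁻ x in Metric.closedBall c δ, ((‖g x‖₊ : ℝ≥0∞))^2 := by
  set W : ℂ → ℝ≥0∞ := fun x => ((‖g x‖₊ : ℝ≥0∞))^2 with hW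
  set sreg : Set (ℝ × ℝ) := Set.Ioo (0:ℝ) δ ×ˢ Set.Ioo (-Real.pi) Real.pi with hsreg
  have hsmeas : MeasurableSet sreg := measurableSet_Ioo.prod measurableSet_Ioo
  -- the composite parametrization lands in the closed ball
  have himage : ∀ p ∈ sreg, circleMap c p.1 p.2 ∈ Metric.closedBall c δ := by
    intro p hp
    simp only [Metric.mem_closedBall, dist_eq_norm]
    rw [circleMap_eq_polar, add_sub_cancel_left]
    rw [Complex.norm_polarCoord_symm, abs_of_pos hp.1.1]
    exact hp.1.2.le
  -- Jacobian change of variables in ℝ × ℝ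
  set B : ℝ × ℝ → ℝ × ℝ →L[ℝ] ℝ × ℝ := fun p =>
    LinearMap.toContinuousLinearMap (Matrix.toLin (Module.Basis.finTwoProd ℝ) (Module.Basis.finTwoProd ℝ)
      !![Real.cos p.2, -p.1 * Real.sin p.2; Real.sin p.2, p.1 * Real.cos p.2]) with hB
  have B_det : ∀ p, (B p).det = p.1 := by
    intro p
    conv_rhs => rw [← one_mul p.1, ← Real.cos_sq_add_sin_sq p.2]
    simp only [hB, neg_mul, LinearMap.det_toContinuousLinearMap, LinearMap.det_toLin,
      Matrix.det_fin_two_of, sub_neg_eq_add]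
    ring
  have hsreg_sub : sreg ⊆ polarCoord.symm.source := by
    rw [OpenPartialHomeomorph.symm_source, polarCoord_target]
    rintro ⟨a, b⟩ hp
    exact ⟨hp.1.1, hp.2⟩
  have hjac : ∫⁻ q in polarCoord.symm '' sreg, W (c + Complex.measurableEquivRealProd.symm q)
      = ∫⁻ p in sreg, ENNReal.ofReal p.1 * W (c + Complex.measurableEquivRealProd.symm (polarCoord.symm p)) := by
    rw [lintegral_image_eq_lintegral_abs_det_fderiv_mul volume hsmeas
      (fun p _ => (hasFDerivAt_polarCoord_symm p).hasFDerivWithinAt)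
      (polarCoord.symm.injOn.mono hsreg_sub)
      (fun q => W (c + Complex.measurableEquivRealProd.symm q))]
    apply setLIntegral_congr_fun hsmeas
    intro p hp
    simp only []
    rw [det_fderivPolarCoordSymm, abs_of_pos hp.1.1]
  -- transfer along the measure preserving equivalences
  have hstep2 : ∫⁻ q in polarCoord.symm '' sreg, W (c + Complex.measurableEquivRealProd.symm q)
      = ∫⁻ x in Complex.measurableEquivRealProd.symm '' (polarCoord.symm '' sreg), W (c + x) :=
    (Complex.volume_preserving_equiv_real_prod.symm).setLIntegral_comp_emb
      Complex.measurableEquivRealProd.symm.measurableEmbedding (fun x => W (c + x))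
      (polarCoord.symm '' sreg)
  have hstep3 : ∫⁻ x in Complex.measurableEquivRealProd.symm '' (polarCoord.symm '' sreg), W (c + x)
      = ∫⁻ y in (fun x => c + x) '' (Complex.measurableEquivRealProd.symm '' (polarCoord.symm '' sreg)), W y :=
    (measurePreserving_add_left volume c).setLIntegral_comp_emb
      (MeasurableEquiv.addLeft c).measurableEmbedding W
      (Complex.measurableEquivRealProd.symm '' (polarCoord.symm '' sreg))
  have hpolar_eq : ∀ p : ℝ × ℝ, Complex.measurableEquivRealProd.symm (polarCoord.symm p) = Complex.polarCoord.symm p := by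
    intro p; rfl
  have hsubset : (fun x => c + x) '' (Complex.measurableEquivRealProd.symm '' (polarCoord.symm '' sreg))
      ⊆ Metric.closedBall c δ := by
    rintro _ ⟨_, ⟨_, ⟨p, hp, rfl⟩, rfl⟩, rfl⟩
    simp only [hpolar_eq]
    exact (circleMap_eq_polar c p) ▸ himage p hp
  have hcirc : ∀ p : ℝ × ℝ,
      c + Complex.measurableEquivRealProd.symm (polarCoord.symm p) = circleMap c p.1 p.2 :=
    fun p => by rw [hpolar_eq, ← circleMap_eq_polar]
  have hψ : Continuous (fun p : ℝ × ℝ => circleMap c p.1 p.2) := by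
    simp only [circleMap]
    fun_prop
  have hae : AEMeasurable (fun p : ℝ × ℝ => ENNReal.ofReal p.1 * W (circleMap c p.1 p.2))
      (volume.restrict sreg) := by
    have hgm : AEMeasurable (fun p : ℝ × ℝ => g (circleMap c p.1 p.2))
        (volume.restrict sreg) :=
      ((hg.continuousOn.comp hψ.continuousOn
        (fun p hp => hsub (himage p hp))).aemeasurable hsmeas)
    exact (measurable_fst.ennreal_ofReal.aemeasurable).mul
      ((hgm.nnnorm.coe_nnreal_ennreal).pow_const 2)
  have hprodmeas : (volume : Measure (ℝ × ℝ)).restrict sreg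
      = (volume.restrict (Set.Ioo (0:ℝ) δ)).prod (volume.restrict (Set.Ioo (-Real.pi) Real.pi)) := by
    rw [Measure.prod_restrict, ← Measure.volume_eq_prod]
  have hCne : ENNReal.ofReal (2*Real.pi) * W c ≠ ⊤ :=
    ENNReal.mul_ne_top ENNReal.ofReal_ne_top (ENNReal.pow_ne_top ENNReal.coe_ne_top)
  have hIoo : ∫⁻ ρ in Set.Ioo (0:ℝ) δ, ENNReal.ofReal ρ = ENNReal.ofReal (δ^2/2) := by
    have h1 : ENNReal.ofReal (∫ x in Set.Ioc (0:ℝ) δ, x)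
        = ∫⁻ ρ in Set.Ioc (0:ℝ) δ, ENNReal.ofReal ρ :=
      ofReal_integral_eq_lintegral_ofReal (continuous_id'.integrableOn_Ioc)
        ((ae_restrict_iff' measurableSet_Ioc).2
          (Filter.Eventually.of_forall fun x hx => hx.1.le))
    rw [Measure.restrict_congr_set Ioo_ae_eq_Ioc, ← h1]
    congr 1
    rw [← intervalIntegral.integral_of_le hδ.le, integral_id]
    ring
  calc ENNReal.ofReal (Real.pi * δ^2) * ((‖g c‖₊ : ℝ≥0∞))^2
      = ENNReal.ofReal (δ^2/2) * (ENNReal.ofReal (2*Real.pi) * W c) := by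
        rw [← mul_assoc, ← ENNReal.ofReal_mul (by positivity)]
        congr 2
        ring
    _ = (∫⁻ ρ in Set.Ioo (0:ℝ) δ, ENNReal.ofReal ρ) * (ENNReal.ofReal (2*Real.pi) * W c) := by
        rw [hIoo]
    _ = ∫⁻ ρ in Set.Ioo (0:ℝ) δ, ENNReal.ofReal ρ * (ENNReal.ofReal (2*Real.pi) * W c) :=
        (lintegral_mul_const' _ _ hCne).symm
    _ ≤ ∫⁻ ρ in Set.Ioo (0:ℝ) δ, ∫⁻ θ in Set.Ioo (-Real.pi) Real.pi,
          ENNReal.ofReal ρ * W (circleMap c ρ θ) := by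
        apply setLIntegral_mono' measurableSet_Ioo
        intro ρ hρ
        rw [lintegral_const_mul' _ _ ENNReal.ofReal_ne_top]
        exact mul_le_mul_right (circle_submean hV hg hρ.1
          ((Metric.closedBall_subset_closedBall hρ.2.le).trans hsub)) _
    _ = ∫⁻ p in sreg, ENNReal.ofReal p.1 * W (circleMap c p.1 p.2) := by
        rw [hprodmeas] at hae ⊢
        rw [lintegral_prod _ hae]
    _ = ∫⁻ p in sreg, ENNReal.ofReal p.1
          * W (c + Complex.measurableEquivRealProd.symm (polarCoord.symm p)) :=
        lintegral_congr fun p => by rw [hcirc]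
    _ = ∫⁻ q in polarCoord.symm '' sreg, W (c + Complex.measurableEquivRealProd.symm q) :=
        hjac.symm
    _ = ∫⁻ y in (fun x => c + x) '' (Complex.measurableEquivRealProd.symm
          '' (polarCoord.symm '' sreg)), W y := by rw [hstep2, hstep3]
    _ ≤ ∫⁻ x in Metric.closedBall c δ, ((‖g x‖₊ : ℝ≥0∞))^2 :=
        lintegral_mono_set hsubset

lemma measurable_indicator_of_continuousOn {X : Type*} [TopologicalSpace X] [MeasurableSpace X]
    [OpensMeasurableSpace X] {U : Set X} (hU : IsOpen U) {h : X → ℝ≥0∞}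
    (hh : ContinuousOn h U) : Measurable (U.indicator h) := by
  apply measurable_of_restrict_of_restrict_compl hU.measurableSet
  · have : U.domRestrict (U.indicator h) = fun x : U => h x :=
      funext fun x => Set.indicator_of_mem x.2 h
    rw [this]
    exact (ContinuousOn.restrict hh).measurable
  · have : Uᶜ.domRestrict (U.indicator h) = fun _ => 0 :=
      funext fun x => Set.indicator_of_notMem x.2 h
    rw [this]
    exact measurable_const

lemma polydisk_submean {m : ℕ} {U : Set (Fin m → ℂ)} (hU : IsOpen U)
    {f : (Fin m → ℂ) → ℂ} (hf : DifferentiableOn ℂ f U) {δ : ℝ} (hδ : 0 < δ)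
    (z : Fin m → ℂ) (hzU : {w : Fin m → ℂ | ∀ i, dist (w i) (z i) ≤ δ} ⊆ U) :
    (ENNReal.ofReal (Real.pi * δ^2))^m * ((‖f z‖₊ : ℝ≥0∞))^2
      ≤ ∫⁻ w in {w : Fin m → ℂ | ∀ i, dist (w i) (z i) ≤ δ}, ((‖f w‖₊ : ℝ≥0∞))^2 := by
  classical
  set c : ℝ≥0∞ := ENNReal.ofReal (Real.pi * δ^2) with hc
  set D : Set (Fin m → ℂ) := {w | ∀ i, dist (w i) (z i) ≤ δ} with hD
  have hDpi : D = Set.pi Set.univ (fun i => Metric.closedBall (z i) δ) := by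
    ext w; simp [hD, Set.mem_pi, Metric.mem_closedBall]
  have hDmeas : MeasurableSet D := by
    rw [hDpi]; exact MeasurableSet.univ_pi (fun i => measurableSet_closedBall)
  set G : (Fin m → ℂ) → ℝ≥0∞ := D.indicator (fun w => ((‖f w‖₊ : ℝ≥0∞))^2) with hG
  have hGmeas : Measurable G := by
    have hGform : G = fun w => (∏ i : Fin m,
        (Metric.closedBall (z i) δ).indicator (fun _ => (1:ℝ≥0∞)) (w i))
        * U.indicator (fun w => ((‖f w‖₊ : ℝ≥0∞))^2) w := by
      funext w
      by_cases hw : w ∈ D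
      · rw [hG, Set.indicator_of_mem hw, Set.indicator_of_mem (hzU hw)]
        have : ∀ i : Fin m, (Metric.closedBall (z i) δ).indicator
            (fun _ => (1:ℝ≥0∞)) (w i) = 1 :=
          fun i => Set.indicator_of_mem (Metric.mem_closedBall.2 (hw i)) _
        rw [Finset.prod_congr rfl (fun i _ => this i)]
        simp
      · rw [hG, Set.indicator_of_notMem hw]
        have : ∃ i : Fin m, ¬ dist (w i) (z i) ≤ δ := by
          by_contra hcon
          push_neg at hcon
          exact hw (fun i => hcon i)
        obtain ⟨i, hi⟩ := this
        have hzero : (Metric.closedBall (z i) δ).indicator (fun _ => (1:ℝ≥0∞)) (w i) = 0 :=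
          Set.indicator_of_notMem (fun hmem => hi (Metric.mem_closedBall.1 hmem)) _
        rw [Finset.prod_eq_zero (Finset.mem_univ i) hzero, zero_mul]
    rw [hGform]
    have hcont : ContinuousOn (fun w : Fin m → ℂ => ((‖f w‖₊ : ℝ≥0∞))^2) U := by
      have heq : (fun w : Fin m → ℂ => ((‖f w‖₊ : ℝ≥0∞))^2)
          = fun w => (((‖f w‖₊^2 : ℝ≥0)) : ℝ≥0∞) := by
        funext w; rw [ENNReal.coe_pow]
      rw [heq]
      exact ENNReal.continuous_coe.comp_continuousOn (hf.continuousOn.nnnorm.pow 2)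
    exact (Finset.measurable_prod Finset.univ (fun i _ =>
      (measurable_const.indicator measurableSet_closedBall).comp (measurable_pi_apply i))).mul
      (measurable_indicator_of_continuousOn hU hcont)
  have main : ∀ s : Finset (Fin m), ∀ y : Fin m → ℂ, (∀ i ∈ s, y i = z i) →
      (∀ i ∉ s, dist (y i) (z i) ≤ δ) →
      c^s.card * ((‖f y‖₊ : ℝ≥0∞))^2 ≤ (∫⋯∫⁻_s, G) y := by
    intro s
    induction s using Finset.induction_on with
    | empty =>
      intro y _ hy2
      simp only [lmarginal_empty, Finset.card_empty, pow_zero, one_mul]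
      rw [hG, Set.indicator_of_mem (show y ∈ D from fun i => hy2 i (Finset.notMem_empty i))]
    | @insert i s hi ih =>
      intro y hy1 hy2
      rw [lmarginal_insert _ hGmeas hi]
      have hyi : y i = z i := hy1 i (Finset.mem_insert_self i s)
      -- the one-dimensional slice map
      have hcontu : Continuous (fun x : ℂ => Function.update y i x) := by
        apply continuous_pi
        intro j
        by_cases h : j = i
        · subst h; simp only [Function.update_self]; exact continuous_id
        · simp only [Function.update_of_ne h]; exact continuous_const
      have hdiffu : Differentiable ℂ (fun x : ℂ => Function.update y i x) := by
        apply differentiable_pi.2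
        intro j
        by_cases h : j = i
        · subst h; simp only [Function.update_self]; exact differentiable_id
        · simp only [Function.update_of_ne h]; exact differentiable_const _
      set V : Set ℂ := (fun x : ℂ => Function.update y i x) ⁻¹' U with hV
      have hVopen : IsOpen V := hU.preimage hcontu
      have hballD : ∀ x ∈ Metric.closedBall (z i) δ, Function.update y i x ∈ D := by
        intro x hx j
        by_cases h : j = i
        · subst h; rw [Function.update_self]; exact Metric.mem_closedBall.1 hx
        · rw [Function.update_of_ne h]
          by_cases hjs : j ∈ s
          · rw [hy1 j (Finset.mem_insert_of_mem hjs)]; simp [hδ.le]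
          · exact hy2 j (by simp [h, hjs])
      have hballV : Metric.closedBall (z i) δ ⊆ V := fun x hx => hzU (hballD x hx)
      have hgd : DifferentiableOn ℂ (fun x : ℂ => f (Function.update y i x)) V := by
        intro x hx
        exact ((hf.differentiableAt (hU.mem_nhds hx)).comp x
          (hdiffu x)).differentiableWithinAt
      have hslice := disk_submean hVopen hgd hδ hballV
      rw [show Function.update y i (z i) = y by rw [← hyi]; exact Function.update_eq_self i y]
        at hslice
      have hupd : ∀ x ∈ Metric.closedBall (z i) δ,
          c^s.card * ((‖f (Function.update y i x)‖₊ : ℝ≥0∞))^2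
            ≤ (∫⋯∫⁻_s, G) (Function.update y i x) := by
        intro x hx
        apply ih
        · intro j hjs
          rw [Function.update_of_ne (by rintro rfl; exact hi hjs)]
          exact hy1 j (Finset.mem_insert_of_mem hjs)
        · intro j hjs
          by_cases h : j = i
          · subst h; rw [Function.update_self]; exact Metric.mem_closedBall.1 hx
          · rw [Function.update_of_ne h]; exact hy2 j (by simp [h, hjs])
      calc c^(insert i s).card * ((‖f y‖₊ : ℝ≥0∞))^2
          = c^s.card * (c * ((‖f y‖₊ : ℝ≥0∞))^2) := by
            rw [Finset.card_insert_of_notMem hi, pow_succ, mul_assoc]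
        _ ≤ c^s.card * ∫⁻ x in Metric.closedBall (z i) δ,
              ((‖f (Function.update y i x)‖₊ : ℝ≥0∞))^2 := mul_le_mul_right hslice _
        _ = ∫⁻ x in Metric.closedBall (z i) δ,
              c^s.card * ((‖f (Function.update y i x)‖₊ : ℝ≥0∞))^2 :=
            (lintegral_const_mul' _ _ (ENNReal.pow_ne_top ENNReal.ofReal_ne_top)).symm
        _ ≤ ∫⁻ x in Metric.closedBall (z i) δ, (∫⋯∫⁻_s, G) (Function.update y i x) :=
            setLIntegral_mono' measurableSet_closedBall hupd
        _ ≤ ∫⁻ x, (∫⋯∫⁻_s, G) (Function.update y i x) :=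
            lintegral_mono' Measure.restrict_le_self (le_refl _)
  have hfinal := main Finset.univ z (fun i _ => rfl)
    (fun i hi => absurd (Finset.mem_univ i) hi)
  rw [Finset.card_univ, Fintype.card_fin] at hfinal
  refine hfinal.trans (le_of_eq ?_)
  rw [← lintegral_eq_lmarginal_univ z, hG]
  rw [← MeasureTheory.volume_pi, lintegral_indicator hDmeas _]

lemma enormsq_eq (x : ℂ) : ((‖x‖₊ : ℝ≥0∞))^2 = ENNReal.ofReal (‖x‖^2) := by
  rw [ENNReal.ofReal_pow (norm_nonneg _), ofReal_norm, enorm_eq_nnnorm]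


lemma closedPolydisk_eq_pi (m : ℕ) (R : ℝ) :
    closedPolydisk m R = Set.pi Set.univ (fun _ : Fin m => Metric.closedBall (0:ℂ) R) := by
  ext w; simp [closedPolydisk, Set.mem_pi, Metric.mem_closedBall, dist_zero_right]

lemma isCompact_closedPolydisk (m : ℕ) (R : ℝ) : IsCompact (closedPolydisk m R) := by
  rw [closedPolydisk_eq_pi]
  exact isCompact_univ_pi (fun i => isCompact_closedBall _ _)

lemma measurableSet_closedPolydisk (m : ℕ) (R : ℝ) : MeasurableSet (closedPolydisk m R) := by
  rw [closedPolydisk_eq_pi]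
  exact MeasurableSet.univ_pi (fun i => measurableSet_closedBall)


/-- Let `𝓜` be a reproducing kernel Hilbert space of holomorphic
functions on `Ω` with orthonormal basis `{e_n}`.  For any closed polydisk
`Δ̄(0;r) ⊂ Ω`, the series `Σ_n ‖e_n‖²_{Δ̄(0;r)}` of squared sup-norms converges. -/
theorem stmt8 {m : ℕ} (Ω : Set ((Fin m) → ℂ)) (hΩopen : IsOpen Ω)
    (hΩbdd : Bornology.IsBounded Ω)
    (𝓜 : Type*) [NormedAddCommGroup 𝓜] [InnerProductSpace ℂ 𝓜] [CompleteSpace 𝓜]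
    -- realization of 𝓜 as a space of holomorphic functions on Ω
    (ev : 𝓜 →ₗ[ℂ] ((Fin m → ℂ) → ℂ))
    (hev_inj : Function.Injective ev)
    (hhol : ∀ f : 𝓜, DifferentiableOn ℂ (ev f) Ω)
    -- the reproducing kernel of 𝓜
    (K : (Fin m → ℂ) → 𝓜)
    (hrep : ∀ (f : 𝓜) (w : Fin m → ℂ), w ∈ Ω → ev f w = inner ℂ f (K w))
    -- an orthonormal basis (e_n) of 𝓜
    (e : HilbertBasis ℕ ℂ 𝓜)
    (r : ℝ) (hr : 0 < r) (hsub : closedPolydisk m r ⊆ Ω) :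
    Summable (fun n : ℕ =>
      (sSup ((fun z => ‖ev (e n) z‖) '' closedPolydisk m r)) ^ 2) := by
  classical
  obtain ⟨ε, hε, hthick⟩ :=
    (isCompact_closedPolydisk m r).exists_thickening_subset_open hΩopen hsub
  set δ : ℝ := ε/2 with hδdef
  have hδ : 0 < δ := by positivity
  set R : ℝ := r + δ with hRdef
  have hR : 0 < R := by positivity
  have hrR : r / R ≤ 1 := by
    rw [div_le_one hR]; linarith
  set Q : Set (Fin m → ℂ) := closedPolydisk m R with hQdef
  have hQΩ : Q ⊆ Ω := by
    intro w hw
    apply hthick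
    rw [Metric.mem_thickening_iff]
    refine ⟨fun i => (r / R : ℝ) • w i, ?_, ?_⟩
    · intro i
      rw [norm_smul, Real.norm_eq_abs, _root_.abs_of_nonneg (by positivity)]
      calc r / R * ‖w i‖ ≤ r / R * R :=
            mul_le_mul_of_nonneg_left (hw i) (by positivity)
        _ = r := by field_simp
    · rw [dist_pi_lt_iff hε]
      intro i
      rw [dist_eq_norm]
      have : w i - (r / R : ℝ) • w i = ((1 - r / R : ℝ)) • w i := by
        rw [sub_smul, one_smul]
      rw [this, norm_smul, Real.norm_eq_abs, _root_.abs_of_nonneg (by linarith)]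
      have h1 : (1 - r / R) * ‖w i‖ ≤ (1 - r / R) * R :=
        mul_le_mul_of_nonneg_left (hw i) (by linarith)
      have h2 : (1 - r / R) * R = δ := by
        rw [sub_mul, one_mul, div_mul_cancel₀ _ hR.ne', hRdef]
        ring
      have h3 : δ < ε := by rw [hδdef]; linarith
      linarith
  have hDQ : ∀ z ∈ closedPolydisk m r,
      {w : Fin m → ℂ | ∀ i, dist (w i) (z i) ≤ δ} ⊆ Q := by
    intro z hz w hw i
    calc ‖w i‖ = ‖z i + (w i - z i)‖ := by ring_nf
      _ ≤ ‖z i‖ + ‖w i - z i‖ := norm_add_le _ _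
      _ ≤ r + δ := add_le_add (hz i) (by rw [← dist_eq_norm]; exact hw i)
  -- Banach–Steinhaus bound for the kernel on Q
  have hptwise : ∀ f : 𝓜, ∃ C, ∀ w : Q, ‖(innerSL ℂ (K w.1)) f‖ ≤ C := by
    intro f
    obtain ⟨C, hC⟩ := (isCompact_closedPolydisk m R).exists_bound_of_continuousOn
      (((hhol f).continuousOn).mono hQΩ)
    refine ⟨C, fun w => ?_⟩
    have h1 : ev f w.1 = inner ℂ f (K w.1) := hrep f w.1 (hQΩ w.2)
    calc ‖(innerSL ℂ (K w.1)) f‖ = ‖(inner ℂ (K w.1) f : ℂ)‖ := rfl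
      _ = ‖(inner ℂ f (K w.1) : ℂ)‖ := norm_inner_symm _ _
      _ = ‖ev f w.1‖ := by rw [h1]
      _ ≤ C := hC w.1 w.2
  obtain ⟨C', hC'⟩ := banach_steinhaus hptwise
  set B : ℝ := max C' 0 with hBdef
  have hB0 : 0 ≤ B := le_max_right _ _
  have hKB : ∀ w ∈ Q, ‖K w‖ ≤ B := by
    intro w hw
    have := hC' ⟨w, hw⟩
    rw [innerSL_apply_norm] at this
    exact this.trans (le_max_left _ _)
  -- Bessel bound for finite sums
  have hBessel : ∀ (S : Finset ℕ) (w : Fin m → ℂ), w ∈ Q →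
      ∑ n ∈ S, ‖ev (e n) w‖^2 ≤ B^2 := by
    intro S w hw
    calc ∑ n ∈ S, ‖ev (e n) w‖^2
        = ∑ n ∈ S, ‖(inner ℂ (e n) (K w) : ℂ)‖^2 :=
          Finset.sum_congr rfl (fun n _ => by rw [hrep (e n) w (hQΩ hw)])
      _ ≤ ‖K w‖^2 := e.orthonormal.sum_inner_products_le (K w)
      _ ≤ B^2 := pow_le_pow_left₀ (norm_nonneg _) (hKB w hw) 2
  -- the per-element integrals
  set c : ℝ≥0∞ := ENNReal.ofReal (Real.pi * δ^2) with hcdef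
  have hc0 : c^m ≠ 0 := pow_ne_zero m (by
    rw [hcdef]
    simp only [ne_eq, ENNReal.ofReal_eq_zero, not_le]
    positivity)
  have hctop : c^m ≠ ⊤ := ENNReal.pow_ne_top ENNReal.ofReal_ne_top
  set Fn : ℕ → (Fin m → ℂ) → ℝ≥0∞ := fun n w => ((‖ev (e n) w‖₊ : ℝ≥0∞))^2 with hFndef
  set In : ℕ → ℝ≥0∞ := fun n => ∫⁻ w in Q, Fn n w with hIndef
  have hQmeas : MeasurableSet Q := measurableSet_closedPolydisk m R
  have hFn_ae : ∀ n, AEMeasurable (Fn n) (volume.restrict Q) := by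
    intro n
    have : AEMeasurable (ev (e n)) (volume.restrict Q) :=
      (((hhol (e n)).continuousOn).mono hQΩ).aemeasurable hQmeas
    exact (this.nnnorm.coe_nnreal_ennreal).pow_const 2
  have hcore : ∀ n, ∀ z ∈ closedPolydisk m r,
      c^m * ((‖ev (e n) z‖₊ : ℝ≥0∞))^2 ≤ In n := by
    intro n z hz
    refine (polydisk_submean hΩopen (hhol (e n)) hδ z
      (((hDQ z hz)).trans hQΩ)).trans ?_
    exact lintegral_mono_set (hDQ z hz)
  have hIn_sum : ∀ S : Finset ℕ, ∑ n ∈ S, In n ≤ ENNReal.ofReal (B^2) * volume Q := by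
    intro S
    have hswap : ∑ n ∈ S, In n = ∫⁻ w in Q, ∑ n ∈ S, Fn n w := by
      induction S using Finset.induction_on with
      | empty => simp
      | @insert a S ha ih =>
        rw [Finset.sum_insert ha, ih, ← lintegral_add_left' (hFn_ae a)]
        apply lintegral_congr
        intro w
        rw [Finset.sum_insert ha]
    rw [hswap]
    calc ∫⁻ w in Q, ∑ n ∈ S, Fn n w
        ≤ ∫⁻ _ in Q, ENNReal.ofReal (B^2) := by
          apply setLIntegral_mono' hQmeas
          intro w hw
          have h1 : ∑ n ∈ S, Fn n w = ENNReal.ofReal (∑ n ∈ S, ‖ev (e n) w‖^2) := by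
            rw [ENNReal.ofReal_sum_of_nonneg (fun n _ => by positivity)]
            exact Finset.sum_congr rfl (fun n _ => enormsq_eq _)
          rw [h1]
          exact ENNReal.ofReal_le_ofReal (hBessel S w hw)
      _ = ENNReal.ofReal (B^2) * volume Q := setLIntegral_const Q _
  have hQfin : volume Q ≠ ⊤ := (isCompact_closedPolydisk m R).measure_lt_top.ne
  set M : ℝ≥0∞ := (c^m)⁻¹ * (ENNReal.ofReal (B^2) * volume Q) with hMdef
  have hMtop : M ≠ ⊤ :=
    ENNReal.mul_ne_top (ENNReal.inv_ne_top.2 hc0)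
      (ENNReal.mul_ne_top ENNReal.ofReal_ne_top hQfin)
  have hIn_le : ∀ n, (c^m)⁻¹ * In n ≤ M := by
    intro n
    apply mul_le_mul_right
    have := hIn_sum {n}
    simpa using this
  set b : ℕ → ℝ := fun n => ((c^m)⁻¹ * In n).toReal with hbdef
  have hb0 : ∀ n, 0 ≤ b n := fun n => ENNReal.toReal_nonneg
  -- pointwise bound on the sup
  have hsupb : ∀ n, (sSup ((fun z => ‖ev (e n) z‖) '' closedPolydisk m r)) ^ 2 ≤ b n := by
    intro n
    have hzb : ∀ z ∈ closedPolydisk m r, ‖ev (e n) z‖ ≤ Real.sqrt (b n) := by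
      intro z hz
      have h1 : ((‖ev (e n) z‖₊ : ℝ≥0∞))^2 ≤ (c^m)⁻¹ * In n := by
        have hx : ((‖ev (e n) z‖₊ : ℝ≥0∞))^2
            = (c^m)⁻¹ * (c^m * ((‖ev (e n) z‖₊ : ℝ≥0∞))^2) := by
          rw [← mul_assoc, ENNReal.inv_mul_cancel hc0 hctop, one_mul]
        rw [hx]
        exact mul_le_mul_right (hcore n z hz) _
      have h2 : ‖ev (e n) z‖^2 ≤ b n := by
        have := ENNReal.toReal_mono (ne_top_of_le_ne_top hMtop (hIn_le n)) h1
        rwa [enormsq_eq, ENNReal.toReal_ofReal (by positivity)] at this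
      exact Real.le_sqrt_of_sq_le h2
    have hsup_le : sSup ((fun z => ‖ev (e n) z‖) '' closedPolydisk m r)
        ≤ Real.sqrt (b n) :=
      Real.sSup_le (by rintro x ⟨z, hz, rfl⟩; exact hzb z hz) (Real.sqrt_nonneg _)
    have hsup_nonneg : 0 ≤ sSup ((fun z => ‖ev (e n) z‖) '' closedPolydisk m r) :=
      Real.sSup_nonneg (by rintro x ⟨z, hz, rfl⟩; exact norm_nonneg _)
    calc (sSup ((fun z => ‖ev (e n) z‖) '' closedPolydisk m r)) ^ 2
        ≤ (Real.sqrt (b n))^2 := pow_le_pow_left₀ hsup_nonneg hsup_le 2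
      _ = b n := Real.sq_sqrt (hb0 n)
  apply summable_of_sum_le (fun n => sq_nonneg _)
  intro u
  calc ∑ n ∈ u, (sSup ((fun z => ‖ev (e n) z‖) '' closedPolydisk m r)) ^ 2
      ≤ ∑ n ∈ u, b n := Finset.sum_le_sum (fun n _ => hsupb n)
    _ = (∑ n ∈ u, (c^m)⁻¹ * In n).toReal :=
        (ENNReal.toReal_sum (fun n _ => ne_top_of_le_ne_top hMtop (hIn_le n))).symm
    _ = ((c^m)⁻¹ * ∑ n ∈ u, In n).toReal := by rw [Finset.mul_sum]
    _ ≤ M.toReal := ENNReal.toReal_mono hMtop (mul_le_mul_right (hIn_sum u) _)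
end

section
/- In the Hilbert space H₀^{(λ,μ)}(𝔻²) with orthogonal monomial basis as above, the joint kernel ker M₁* ∩ ker M₂* of the adjoints of the two coordinate multiplications is the two-dimensional span of z₁ and z₂. -/
/-- `wt a n = n! / (a(a+1)⋯(a+n−1))`, the squared norm of `z^n` in the weighted
space with kernel `(1 − z w̄)^{−a}`. -/
noncomputable def wt (a : ℝ) (n : ℕ) : ℝ :=
  (n.factorial : ℝ) / ∏ i ∈ Finset.range n, (a + i)

lemma wt_pos {a : ℝ} (ha : 0 < a) (n : ℕ) : 0 < wt a n := by
  apply div_pos (by positivity)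
  apply Finset.prod_pos
  intro i _
  positivity

/-- In `H₀^{(λ,μ)}(𝔻²)` the joint kernel `ker M₁* ∩ ker M₂*` of the
adjoints of the two coordinate multiplications is the two-dimensional span of
`z₁` and `z₂`. -/
theorem stmt10 (lam mu : ℝ) (hlam : 0 < lam) (hmu : 0 < mu)
    (H : Type*) [NormedAddCommGroup H] [InnerProductSpace ℂ H] [CompleteSpace H]
    -- v (m,n) represents the monomial z₁^m z₂^n, for (m,n) ≠ (0,0)
    (v : ℕ × ℕ → H)
    (horth : ∀ p q : ℕ × ℕ, p ≠ (0,0) → q ≠ (0,0) → p ≠ q →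
      (inner ℂ (v p) (v q) : ℂ) = 0)
    (hnorm : ∀ p : ℕ × ℕ, p ≠ (0,0) → ‖v p‖ ^ 2 = wt lam p.1 * wt mu p.2)
    (hdense : Dense ((Submodule.span ℂ (v '' {p | p ≠ (0,0)}) : Submodule ℂ H) : Set H))
    -- M₁, M₂ are the multiplications by z₁, z₂
    (M₁ M₂ : H →L[ℂ] H)
    (hM₁ : ∀ p : ℕ × ℕ, p ≠ (0,0) → M₁ (v p) = v (p.1 + 1, p.2))
    (hM₂ : ∀ p : ℕ × ℕ, p ≠ (0,0) → M₂ (v p) = v (p.1, p.2 + 1))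
    -- the action of the adjoints on the monomial basis
    (hadj₁ : (∀ m n : ℕ, (m, n) ≠ (0, 0) →
        ContinuousLinearMap.adjoint M₁ (v (m + 1, n)) =
          ((((m : ℝ) + 1) / (lam + m) : ℝ) : ℂ) • v (m, n)) ∧
      ContinuousLinearMap.adjoint M₁ (v (1, 0)) = 0 ∧
      ∀ n : ℕ, ContinuousLinearMap.adjoint M₁ (v (0, n + 1)) = 0)
    (hadj₂ : (∀ m n : ℕ, (m, n) ≠ (0, 0) →
        ContinuousLinearMap.adjoint M₂ (v (m, n + 1)) =
          ((((n : ℝ) + 1) / (mu + n) : ℝ) : ℂ) • v (m, n)) ∧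
      ContinuousLinearMap.adjoint M₂ (v (0, 1)) = 0 ∧
      ∀ m : ℕ, ContinuousLinearMap.adjoint M₂ (v (m + 1, 0)) = 0) :
    LinearMap.ker (ContinuousLinearMap.adjoint M₁ : H →ₗ[ℂ] H) ⊓
        LinearMap.ker (ContinuousLinearMap.adjoint M₂ : H →ₗ[ℂ] H) =
      Submodule.span ℂ {v (1, 0), v (0, 1)} := by
  obtain ⟨hA1, hA2, hA3⟩ := hadj₁
  obtain ⟨hB1, hB2, hB3⟩ := hadj₂
  have h10 : ((1,0) : ℕ × ℕ) ≠ (0,0) := by simp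
  have h01 : ((0,1) : ℕ × ℕ) ≠ (0,0) := by simp
  -- norms of e₁ = v (1,0) and e₂ = v (0,1)
  have hn1 : (0 : ℝ) < ‖v (1,0)‖ ^ 2 := by
    rw [hnorm _ h10]; exact mul_pos (wt_pos hlam 1) (wt_pos hmu 0)
  have hn2 : (0 : ℝ) < ‖v (0,1)‖ ^ 2 := by
    rw [hnorm _ h01]; exact mul_pos (wt_pos hlam 0) (wt_pos hmu 1)
  apply le_antisymm
  · -- the hard inclusion
    rintro x ⟨hx1, hx2⟩
    rw [SetLike.mem_coe, LinearMap.mem_ker, ContinuousLinearMap.coe_coe] at hx1 hx2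
    -- x is orthogonal to all v p with p ∉ {(0,0),(1,0),(0,1)}
    have key : ∀ p : ℕ × ℕ, p ≠ (0,0) → p ≠ (1,0) → p ≠ (0,1) →
        (inner ℂ x (v p) : ℂ) = 0 := by
      rintro ⟨m, n⟩ hp0 hp1 hp2
      rcases Nat.eq_zero_or_pos m with hm | hm
      · subst hm
        obtain ⟨k, rfl⟩ : ∃ k, n = (k + 1) + 1 := by
          match n with
          | 0 => exact absurd rfl hp0
          | 1 => exact absurd rfl hp2
          | k + 2 => exact ⟨k, rfl⟩
        have hq : ((0, k+1) : ℕ × ℕ) ≠ (0,0) := by simp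
        have h := hM₂ (0, k+1) hq
        simp only at h
        rw [show ((0:ℕ), k + 1 + 1) = ((0:ℕ), (k+1) + 1) from rfl, ← h,
          ← ContinuousLinearMap.adjoint_inner_left, hx2, inner_zero_left]
      · obtain ⟨m', rfl⟩ : ∃ m', m = m' + 1 := ⟨m - 1, (Nat.succ_pred_eq_of_pos hm).symm⟩
        have hq : ((m', n) : ℕ × ℕ) ≠ (0,0) := by
          intro hc
          apply hp1
          rw [Prod.mk.injEq] at hc
          simp [hc.1, hc.2]
        have h := hM₁ (m', n) hq
        simp only at h
        rw [← h, ← ContinuousLinearMap.adjoint_inner_left, hx1, inner_zero_left]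
    -- coefficients
    set e₁ := v (1,0) with he₁
    set e₂ := v (0,1) with he₂
    set c₁ : ℂ := inner ℂ e₁ x / ((‖e₁‖ ^ 2 : ℝ) : ℂ) with hc₁
    set c₂ : ℂ := inner ℂ e₂ x / ((‖e₂‖ ^ 2 : ℝ) : ℂ) with hc₂
    set y : H := x - c₁ • e₁ - c₂ • e₂ with hy
    have hee : (inner ℂ e₁ e₂ : ℂ) = 0 := horth _ _ h10 h01 (by simp)
    have he11 : (inner ℂ e₁ e₁ : ℂ) = ((‖e₁‖ ^ 2 : ℝ) : ℂ) := by
      rw [inner_self_eq_norm_sq_to_K]; norm_num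
    have he22 : (inner ℂ e₂ e₂ : ℂ) = ((‖e₂‖ ^ 2 : ℝ) : ℂ) := by
      rw [inner_self_eq_norm_sq_to_K]; norm_num
    -- y is orthogonal to every basis vector
    have hyp : ∀ p : ℕ × ℕ, p ≠ (0,0) → (inner ℂ (v p) y : ℂ) = 0 := by
      intro p hp
      rcases eq_or_ne p (1,0) with rfl | hp1
      · simp only [hy, inner_sub_right, inner_smul_right, ← he₁, hee, he11, mul_zero,
          sub_zero, hc₁]
        have h0 : ((‖e₁‖ ^ 2 : ℝ) : ℂ) ≠ 0 := by exact_mod_cast ne_of_gt hn1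
        rw [div_mul_cancel₀ _ h0, sub_self]
      rcases eq_or_ne p (0,1) with rfl | hp2
      · have hee' : (inner ℂ e₂ e₁ : ℂ) = 0 := horth _ _ h01 h10 (by simp)
        simp only [hy, inner_sub_right, inner_smul_right, ← he₂, hee', he22, mul_zero,
          sub_zero, hc₂]
        have h0 : ((‖e₂‖ ^ 2 : ℝ) : ℂ) ≠ 0 := by exact_mod_cast ne_of_gt hn2
        rw [div_mul_cancel₀ _ h0, sub_self]
      · have h1 : (inner ℂ (v p) x : ℂ) = 0 :=
          inner_eq_zero_symm.mp (key p hp hp1 hp2)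
        simp only [hy, inner_sub_right, inner_smul_right, h1, he₁, he₂,
          horth p (1,0) hp h10 hp1, horth p (0,1) hp h01 hp2]
        ring
    -- hence y ∈ (span)ᗮ = ⊥
    have hyo : y ∈ (Submodule.span ℂ (v '' {p | p ≠ (0,0)}))ᗮ := by
      rw [Submodule.mem_orthogonal]
      intro u hu
      induction hu using Submodule.span_induction with
      | mem u hu =>
        obtain ⟨p, hp, rfl⟩ := hu
        exact hyp p hp
      | zero => simp
      | add u w _ _ hu hw => rw [inner_add_left, hu, hw, add_zero]
      | smul c u _ hu => rw [inner_smul_left, hu, mul_zero]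
    have hbot : (Submodule.span ℂ (v '' {p | p ≠ (0,0)}))ᗮ = ⊥ := by
      rw [← Submodule.topologicalClosure_eq_top_iff,
        ← Submodule.dense_iff_topologicalClosure_eq_top]
      exact hdense
    have hy0 : y = 0 := by
      rw [hbot] at hyo
      simpa using hyo
    have hx : x = c₁ • e₁ + c₂ • e₂ := by
      have := hy0
      rw [hy, sub_sub, sub_eq_zero] at this
      exact this
    rw [hx]
    exact Submodule.add_mem _
      (Submodule.smul_mem _ _ (Submodule.subset_span (by simp)))
      (Submodule.smul_mem _ _ (Submodule.subset_span (by simp)))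
  · -- easy inclusion
    rw [Submodule.span_le]
    rintro u (rfl | rfl)
    · exact ⟨by rw [SetLike.mem_coe, LinearMap.mem_ker]; exact hA2,
        by rw [SetLike.mem_coe, LinearMap.mem_ker]; exact hB3 0⟩
    · exact ⟨by rw [SetLike.mem_coe, LinearMap.mem_ker]; exact hA3 0,
        by rw [SetLike.mem_coe, LinearMap.mem_ker]; exact hB2⟩
end

section
/- Let T = (T₁,…,T_m) be a commuting tuple of bounded operators on a Hilbert space H and w₀ ∈ ℂ^m. Let D_{(T−w)*} : H → H^m be the column operator f ↦ ((T_j − w_j)* f)_j, and suppose it has closed range at w₀. Let R(w₀) be the (Moore–Penrose type) operator satisfying R(w₀) D_{(T−w₀)*} = I − P_{ker D_{(T−w₀)*}} and D_{(T−w₀)*} R(w₀) = P_{ran D_{(T−w₀)*}}. Then for every w with ‖w − w₀‖ < ‖R(w₀)‖^{−1}, writing 𝔓₀ for the orthogonal projection onto ran D_{(T−w₀)*}, one has 𝔓₀ D_{(T−w)*} = D_{(T−w₀)*} (I − R(w₀) D_{w̄−w̄₀}), where D_{w̄−w̄₀} : H^m → H, (f_j) ↦ Σ_j (w̄_j − w̄₀ⱼ)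 f_j; in particular, since I − R(w₀) D_{w̄−w̄₀} is invertible, dim ker 𝔓₀ D_{(T−w)*} = dim ker D_{(T−w₀)*} is constant on this ball. -/
open ContinuousLinearMap

/-- Let `T = (T₁,…,T_m)` be a commuting tuple of bounded operators on a
Hilbert space `H` and `w₀ ∈ ℂ^m`.  Suppose the column operator
`D_{(T−w₀)*} : f ↦ ((T_j − w₀ⱼ)* f)_j` has closed range, and `R` is its generalized
inverse, satisfying `R D_{(T−w₀)*} = I − P_{ker}` and `D_{(T−w₀)*} R = 𝔓₀`, where
`P_ker` and `𝔓₀` are the orthogonal projections onto `ker D_{(T−w₀)*}` and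
`ran D_{(T−w₀)*}`.  Then for `‖w − w₀‖ < ‖R‖⁻¹` one has
`𝔓₀ D_{(T−w)*} = D_{(T−w₀)*}(I − R D_{w̄−w̄₀})`, and the dimension of
`ker 𝔓₀ D_{(T−w)*}` equals that of `ker D_{(T−w₀)*}`. -/
theorem stmt14 {m : ℕ}
    (H : Type*) [NormedAddCommGroup H] [InnerProductSpace ℂ H] [CompleteSpace H]
    (T : Fin m → H →L[ℂ] H)
    (hcomm : ∀ i j, T i ∘L T j = T j ∘L T i)
    (w₀ : EuclideanSpace ℂ (Fin m))
    -- the column operators D_{(T−w)*}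
    (D : EuclideanSpace ℂ (Fin m) → H →L[ℂ] (PiLp 2 fun _ : Fin m => H))
    (hD : ∀ w f j, D w f j = ContinuousLinearMap.adjoint (T j) f
      - (starRingEnd ℂ) (w j) • f)
    -- closed range at w₀
    (hclosed : IsClosed ((LinearMap.range (D w₀ : H →ₗ[ℂ] PiLp 2 fun _ : Fin m => H) : Submodule ℂ _) :
      Set (PiLp 2 fun _ : Fin m => H)))
    -- the orthogonal projection onto ker D_{(T−w₀)*}
    (Pker : H →L[ℂ] H)
    (hPker : ∀ f, Pker f ∈ LinearMap.ker (D w₀ : H →ₗ[ℂ] PiLp 2 fun _ : Fin m => H) ∧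
      f - Pker f ∈ (LinearMap.ker (D w₀ : H →ₗ[ℂ] PiLp 2 fun _ : Fin m => H) : Submodule ℂ H)ᗮ)
    -- the orthogonal projection 𝔓₀ onto ran D_{(T−w₀)*}
    (P₀ : (PiLp 2 fun _ : Fin m => H) →L[ℂ] (PiLp 2 fun _ : Fin m => H))
    (hP₀ : ∀ g, P₀ g ∈ LinearMap.range (D w₀ : H →ₗ[ℂ] PiLp 2 fun _ : Fin m => H) ∧
      g - P₀ g ∈ (LinearMap.range (D w₀ : H →ₗ[ℂ] PiLp 2 fun _ : Fin m => H) : Submodule ℂ _)ᗮ)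
    -- the generalized (Moore–Penrose type) inverse R of D_{(T−w₀)*}
    (R : (PiLp 2 fun _ : Fin m => H) →L[ℂ] H)
    (hR₁ : ∀ f, R (D w₀ f) = f - Pker f)
    (hR₂ : ∀ g, D w₀ (R g) = P₀ g)
    -- the operators D_{w̄−w̄₀}
    (Dbar : EuclideanSpace ℂ (Fin m) → H →L[ℂ] (PiLp 2 fun _ : Fin m => H))
    (hDbar : ∀ u f j, Dbar u f j = (starRingEnd ℂ) (u j) • f)
    (w : EuclideanSpace ℂ (Fin m)) (hw : ‖w - w₀‖ < ‖R‖⁻¹) :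
    P₀ ∘L D w = D w₀ ∘L (ContinuousLinearMap.id ℂ H - R ∘L Dbar (w - w₀)) ∧
    Module.rank ℂ (LinearMap.ker (P₀ ∘L D w : H →ₗ[ℂ] PiLp 2 fun _ : Fin m => H)) =
      Module.rank ℂ (LinearMap.ker (D w₀ : H →ₗ[ℂ] PiLp 2 fun _ : Fin m => H)) := by
  set u : EuclideanSpace ℂ (Fin m) := w - w₀ with hu
  -- D w = D w₀ - Dbar u pointwise
  have hsplit : ∀ f : H, D w f = D w₀ f - Dbar u f := by
    intro f
    ext j
    have huj : u j = w j - w₀ j := rfl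
    simp only [PiLp.sub_apply, hD, hDbar, huj, map_sub, sub_smul]
    abel
  -- P₀ fixes elements of the range
  have hfix : ∀ g, g ∈ LinearMap.range (D w₀ : H →ₗ[ℂ] PiLp 2 fun _ : Fin m => H) → P₀ g = g := by
    intro g hg
    have h1 := (hP₀ g).1
    have h2 := (hP₀ g).2
    have hmem : g - P₀ g ∈ LinearMap.range (D w₀ : H →ₗ[ℂ] PiLp 2 fun _ : Fin m => H) := sub_mem hg h1
    have hz : g - P₀ g = 0 := by
      have := (Submodule.mem_orthogonal _ _).1 h2 _ hmem
      rwa [inner_self_eq_zero] at this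
    exact (sub_eq_zero.mp hz).symm
  -- first statement
  have hmain : P₀ ∘L D w = D w₀ ∘L (ContinuousLinearMap.id ℂ H - R ∘L Dbar u) := by
    ext f : 1
    simp only [ContinuousLinearMap.comp_apply, ContinuousLinearMap.sub_apply,
      ContinuousLinearMap.id_apply, map_sub]
    rw [hsplit f, map_sub, hfix (D w₀ f) ⟨f, rfl⟩, ← hR₂]
  refine ⟨hmain, ?_⟩
  -- norm bound on Dbar
  have hDbarnorm : ∀ v : EuclideanSpace ℂ (Fin m), ‖Dbar v‖ ≤ ‖v‖ := by
    intro v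
    refine ContinuousLinearMap.opNorm_le_bound _ (norm_nonneg v) fun f => ?_
    have hsq : ‖Dbar v f‖ ^ 2 = (‖v‖ * ‖f‖) ^ 2 := by
      rw [PiLp.norm_sq_eq_of_L2, mul_pow, PiLp.norm_sq_eq_of_L2, Finset.sum_mul]
      refine Finset.sum_congr rfl fun j _ => ?_
      rw [hDbar, norm_smul, RCLike.norm_conj, mul_pow]
    have h1 : (0:ℝ) ≤ ‖Dbar v f‖ := norm_nonneg _
    have h2 : (0:ℝ) ≤ ‖v‖ * ‖f‖ := mul_nonneg (norm_nonneg _) (norm_nonneg _)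
    nlinarith [hsq]
  -- the perturbation has norm < 1
  have ht : ‖R ∘L Dbar u‖ < 1 := by
    have hle : ‖R ∘L Dbar u‖ ≤ ‖R‖ * ‖u‖ :=
      le_trans (ContinuousLinearMap.opNorm_comp_le _ _)
        (mul_le_mul_of_nonneg_left (hDbarnorm u) (norm_nonneg R))
    rcases eq_or_lt_of_le (norm_nonneg R) with hR0 | hRpos
    · have : ‖R‖ = 0 := hR0.symm
      calc ‖R ∘L Dbar u‖ ≤ ‖R‖ * ‖u‖ := hle
        _ = 0 := by rw [this, zero_mul]
        _ < 1 := one_pos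
    · have : ‖R‖ * ‖u‖ < ‖R‖ * ‖R‖⁻¹ :=
        mul_lt_mul_of_pos_left hw hRpos
      rw [mul_inv_cancel₀ (ne_of_gt hRpos)] at this
      exact lt_of_le_of_lt hle this
  -- the invertible operator S = 1 - R ∘L Dbar u
  set t : H →L[ℂ] H := R ∘L Dbar u with hts
  have hunit : (H →L[ℂ] H)ˣ := Units.oneSub t ht
  let e : H ≃L[ℂ] H := ContinuousLinearEquiv.ofUnit (Units.oneSub t ht)
  have he : (e : H →L[ℂ] H) = ContinuousLinearMap.id ℂ H - t := rfl
  -- kernels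
  have hker : LinearMap.ker (P₀ ∘L D w : H →ₗ[ℂ] PiLp 2 fun _ : Fin m => H) =
      Submodule.comap (e.toLinearEquiv : H →ₗ[ℂ] H) (LinearMap.ker (D w₀ : H →ₗ[ℂ] PiLp 2 fun _ : Fin m => H)) := by
    rw [hmain]
    ext x
    simp only [LinearMap.mem_ker, Submodule.mem_comap, ContinuousLinearMap.coe_comp',
      Function.comp_apply, LinearEquiv.coe_coe]
    constructor
    · intro hx
      have : e.toLinearEquiv x = (ContinuousLinearMap.id ℂ H - t) x := rfl
      rw [this]
      exact hx
    · intro hx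
      have hx' : e.toLinearEquiv x = (ContinuousLinearMap.id ℂ H - t) x := rfl
      rw [hx'] at hx
      exact hx
  rw [hker, Submodule.comap_equiv_eq_map_symm]
  exact ((e.toLinearEquiv.symm.submoduleMap (LinearMap.ker (D w₀ : H →ₗ[ℂ] PiLp 2 fun _ : Fin m => H))).rank_eq).symm
end

section
/- Let H²₀(𝔻²) = {f ∈ H²(𝔻²) : f(0,0) = 0} be the submodule of the Hardy space of the bidisk, a Hilbert module over ℂ[z₁,z₂] via multiplication operators M₁, M₂. Then the dimension of the joint kernel ⋂_{j=1,2} ker(M_j − w_j)* equals 1 for w ≠ (0,0) in 𝔻², and equals 2 for w = (0,0) (where it is spanned by z₁ and z₂). -/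
open ContinuousLinearMap

local notation "⟪" x ", " y "⟫" => @inner ℂ _ _ x y

/-- If `y` is orthogonal to all the `v p`, `p ≠ (0,0)`, and their span is dense, then `y = 0`. -/
lemma aux_eq_zero
    {H : Type*} [NormedAddCommGroup H] [InnerProductSpace ℂ H] [CompleteSpace H]
    (v : ℕ × ℕ → H)
    (hdense : Dense ((Submodule.span ℂ (v '' {p | p ≠ (0,0)}) : Submodule ℂ H) : Set H))
    (y : H) (h : ∀ p : ℕ × ℕ, p ≠ (0,0) → ⟪y, v p⟫ = 0) : y = 0 := by
  set K := (Submodule.span ℂ (v '' {p | p ≠ (0,0)}) : Submodule ℂ H)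
  have hK : Kᗮ = ⊥ := by
    rw [← Submodule.topologicalClosure_eq_top_iff]
    exact Submodule.dense_iff_topologicalClosure_eq_top.mp hdense
  have hy : y ∈ Kᗮ := by
    rw [Submodule.mem_orthogonal']
    intro u hu
    induction hu using Submodule.span_induction with
    | mem x hx =>
      obtain ⟨p, hp, rfl⟩ := hx
      exact h p hp
    | zero => simp
    | add x z hx hz ihx ihz => rw [inner_add_right, ihx, ihz, add_zero]
    | smul a x hx ihx => rw [inner_smul_right, ihx, mul_zero]
  rw [hK] at hy
  simpa using hy

/-- Coefficients satisfying the two shift recurrences are determined by a single scalar. -/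
lemma aux_coeff (w₁ w₂ t : ℂ) (c : ℕ × ℕ → ℂ)
    (h1 : ∀ p : ℕ × ℕ, p ≠ (0,0) → c (p.1 + 1, p.2) = w₁ * c p)
    (h2 : ∀ p : ℕ × ℕ, p ≠ (0,0) → c (p.1, p.2 + 1) = w₂ * c p)
    (ht1 : c (1,0) = w₁ * t) (ht2 : c (0,1) = w₂ * t) :
    ∀ p : ℕ × ℕ, p ≠ (0,0) → c p = w₁ ^ p.1 * w₂ ^ p.2 * t := by
  have hrow : ∀ m : ℕ, c (m + 1, 0) = w₁ ^ (m + 1) * t := by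
    intro m
    induction m with
    | zero => simpa using ht1
    | succ k ih =>
      have := h1 (k + 1, 0) (by simp)
      rw [this, ih]; ring
  have hcol : ∀ n : ℕ, c (0, n + 1) = w₂ ^ (n + 1) * t := by
    intro n
    induction n with
    | zero => simpa using ht2
    | succ k ih =>
      have := h2 (0, k + 1) (by simp)
      rw [this, ih]; ring
  have hgen : ∀ m n : ℕ, c (m + 1, n) = w₁ ^ (m + 1) * w₂ ^ n * t := by
    intro m n
    induction n with
    | zero => simpa using hrow m
    | succ k ih =>
      have := h2 (m + 1, k) (by simp)
      rw [this, ih]; ring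
  rintro ⟨m, n⟩ hp
  match m, n with
  | 0, 0 => exact absurd rfl hp
  | 0, n + 1 => simpa using hcol n
  | m + 1, n => simpa using hgen m n

lemma aux_t (w₁ w₂ : ℂ) (hw : w₁ ≠ 0 ∨ w₂ ≠ 0) (c : ℕ × ℕ → ℂ)
    (h1 : ∀ p : ℕ × ℕ, p ≠ (0,0) → c (p.1 + 1, p.2) = w₁ * c p)
    (h2 : ∀ p : ℕ × ℕ, p ≠ (0,0) → c (p.1, p.2 + 1) = w₂ * c p) :
    ∃ t : ℂ, c (1,0) = w₁ * t ∧ c (0,1) = w₂ * t := by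
  have key : w₁ * c (0,1) = w₂ * c (1,0) := by
    have e1 := h1 (0,1) (by simp)
    have e2 := h2 (1,0) (by simp)
    simp only [Prod.fst, Prod.snd] at e1 e2
    rw [← e1, ← e2]
  rcases hw with hw | hw
  · exact ⟨c (1,0) / w₁, by field_simp, by field_simp; linear_combination key⟩
  · exact ⟨c (0,1) / w₂, by field_simp; linear_combination -key, by field_simp⟩


/-- Let `H²₀(𝔻²) = {f ∈ H²(𝔻²) : f(0,0) = 0}`, with orthonormal basis
the monomials `z₁^m z₂^n`, `(m,n) ≠ (0,0)`, and multiplications `M₁`, `M₂` by the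
coordinates.  Then for `w = (w₁,w₂) ∈ 𝔻²`, the joint kernel
`⋂_{j=1,2} ker (M_j − w_j)*` has dimension `1` if `w ≠ (0,0)` and dimension `2` at
`w = (0,0)`, where it is spanned by `z₁` and `z₂`. -/
theorem stmt18
    (H : Type*) [NormedAddCommGroup H] [InnerProductSpace ℂ H] [CompleteSpace H]
    -- v (m,n) represents the monomial z₁^m z₂^n, for (m,n) ≠ (0,0)
    (v : ℕ × ℕ → H)
    (horth : Orthonormal ℂ (fun p : {p : ℕ × ℕ // p ≠ (0,0)} => v p.1))
    (hdense : Dense ((Submodule.span ℂ (v '' {p | p ≠ (0,0)}) : Submodule ℂ H) : Set H))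
    -- M₁, M₂ are the multiplications by z₁, z₂
    (M₁ M₂ : H →L[ℂ] H)
    (hM₁ : ∀ p : ℕ × ℕ, p ≠ (0,0) → M₁ (v p) = v (p.1 + 1, p.2))
    (hM₂ : ∀ p : ℕ × ℕ, p ≠ (0,0) → M₂ (v p) = v (p.1, p.2 + 1))
    (w₁ w₂ : ℂ) (hw₁ : ‖w₁‖ < 1) (hw₂ : ‖w₂‖ < 1) :
    ((w₁, w₂) ≠ (0, 0) →
      Module.finrank ℂ
        (LinearMap.ker ((ContinuousLinearMap.adjoint (M₁ - w₁ • (1 : H →L[ℂ] H)) : H →ₗ[ℂ] H)) ⊓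
          LinearMap.ker ((ContinuousLinearMap.adjoint (M₂ - w₂ • (1 : H →L[ℂ] H)) : H →ₗ[ℂ] H)) :
          Submodule ℂ H) = 1) ∧
    ((w₁, w₂) = (0, 0) →
      (LinearMap.ker ((ContinuousLinearMap.adjoint (M₁ - w₁ • (1 : H →L[ℂ] H)) : H →ₗ[ℂ] H)) ⊓
          LinearMap.ker ((ContinuousLinearMap.adjoint (M₂ - w₂ • (1 : H →L[ℂ] H)) : H →ₗ[ℂ] H)) :
          Submodule ℂ H) = Submodule.span ℂ {v (1, 0), v (0, 1)} ∧
      Module.finrank ℂ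
        (LinearMap.ker ((ContinuousLinearMap.adjoint (M₁ - w₁ • (1 : H →L[ℂ] H)) : H →ₗ[ℂ] H)) ⊓
          LinearMap.ker ((ContinuousLinearMap.adjoint (M₂ - w₂ • (1 : H →L[ℂ] H)) : H →ₗ[ℂ] H)) :
          Submodule ℂ H) = 2) := by
  -- inner products of basis vectors
  have hv_inner : ∀ p q : ℕ × ℕ, p ≠ (0,0) → q ≠ (0,0) →
      ⟪v p, v q⟫ = if p = q then 1 else 0 := by
    intro p q hp hq
    have := orthonormal_iff_ite.mp horth ⟨p, hp⟩ ⟨q, hq⟩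
    simpa [Subtype.ext_iff] using this
  -- characterization of the kernels of the adjoints
  have hker₁ : ∀ x : H,
      x ∈ LinearMap.ker ((ContinuousLinearMap.adjoint (M₁ - w₁ • (1 : H →L[ℂ] H))) : H →ₗ[ℂ] H) ↔
        ∀ p : ℕ × ℕ, p ≠ (0,0) → ⟪x, v (p.1 + 1, p.2)⟫ = w₁ * ⟪x, v p⟫ := by
    intro x
    constructor
    · intro hx p hp
      have h0 : ⟪ContinuousLinearMap.adjoint (M₁ - w₁ • (1 : H →L[ℂ] H)) x, v p⟫ = 0 := by
        rw [show ContinuousLinearMap.adjoint (M₁ - w₁ • (1 : H →L[ℂ] H)) x = 0 from LinearMap.mem_ker.mp hx]; simp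
      rw [ContinuousLinearMap.adjoint_inner_left] at h0
      simp only [ContinuousLinearMap.sub_apply, ContinuousLinearMap.smul_apply,
        ContinuousLinearMap.one_apply, hM₁ p hp, inner_sub_right, inner_smul_right] at h0
      exact sub_eq_zero.mp h0
    · intro h
      rw [LinearMap.mem_ker]
      apply aux_eq_zero v hdense
      intro p hp
      rw [ContinuousLinearMap.coe_coe, ContinuousLinearMap.adjoint_inner_left]
      simp only [ContinuousLinearMap.sub_apply, ContinuousLinearMap.smul_apply,
        ContinuousLinearMap.one_apply, hM₁ p hp, inner_sub_right, inner_smul_right]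
      rw [h p hp, sub_self]
  have hker₂ : ∀ x : H,
      x ∈ LinearMap.ker ((ContinuousLinearMap.adjoint (M₂ - w₂ • (1 : H →L[ℂ] H))) : H →ₗ[ℂ] H) ↔
        ∀ p : ℕ × ℕ, p ≠ (0,0) → ⟪x, v (p.1, p.2 + 1)⟫ = w₂ * ⟪x, v p⟫ := by
    intro x
    constructor
    · intro hx p hp
      have h0 : ⟪ContinuousLinearMap.adjoint (M₂ - w₂ • (1 : H →L[ℂ] H)) x, v p⟫ = 0 := by
        rw [show ContinuousLinearMap.adjoint (M₂ - w₂ • (1 : H →L[ℂ] H)) x = 0 from LinearMap.mem_ker.mp hx]; simp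
      rw [ContinuousLinearMap.adjoint_inner_left] at h0
      simp only [ContinuousLinearMap.sub_apply, ContinuousLinearMap.smul_apply,
        ContinuousLinearMap.one_apply, hM₂ p hp, inner_sub_right, inner_smul_right] at h0
      exact sub_eq_zero.mp h0
    · intro h
      rw [LinearMap.mem_ker]
      apply aux_eq_zero v hdense
      intro p hp
      rw [ContinuousLinearMap.coe_coe, ContinuousLinearMap.adjoint_inner_left]
      simp only [ContinuousLinearMap.sub_apply, ContinuousLinearMap.smul_apply,
        ContinuousLinearMap.one_apply, hM₂ p hp, inner_sub_right, inner_smul_right]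
      rw [h p hp, sub_self]
  constructor
  · -- case w ≠ (0,0)
    intro hne
    have hw : w₁ ≠ 0 ∨ w₂ ≠ 0 := by
      by_contra hcon
      push_neg at hcon
      exact hne (by simp [Prod.ext_iff, hcon.1, hcon.2])
    -- the Hilbert basis
    have hrange : Set.range (fun p : {p : ℕ × ℕ // p ≠ (0,0)} => v p.1)
        = v '' {p | p ≠ (0,0)} := (Set.image_eq_range v {p | p ≠ (0,0)}).symm
    let b : HilbertBasis {p : ℕ × ℕ // p ≠ (0,0)} ℂ H :=
      HilbertBasis.mk horth (by
        rw [hrange]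
        exact le_of_eq (Submodule.dense_iff_topologicalClosure_eq_top.mp hdense).symm)
    -- the candidate kernel vector
    set g : {p : ℕ × ℕ // p ≠ (0,0)} → ℂ :=
      fun q => (starRingEnd ℂ) (w₁ ^ q.1.1 * w₂ ^ q.1.2) with hg_def
    have hgmem : Memℓp g 2 := by
      apply memℓp_gen
      have hsum : Summable (fun p : ℕ × ℕ => (‖w₁‖ ^ 2) ^ p.1 * (‖w₂‖ ^ 2) ^ p.2) := by
        apply Summable.mul_of_nonneg
        · exact summable_geometric_of_lt_one (by positivity)
            (by nlinarith [norm_nonneg w₁])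
        · exact summable_geometric_of_lt_one (by positivity)
            (by nlinarith [norm_nonneg w₂])
        · intro m; positivity
        · intro n; positivity
      have hsub := hsum.subtype {p : ℕ × ℕ | p ≠ (0,0)}
      apply Summable.congr hsub
      intro q
      simp only [Function.comp_apply, hg_def]
      rw [RCLike.norm_conj]
      rw [show ((2 : ENNReal).toReal) = ((2 : ℕ) : ℝ) from by simp]
      rw [Real.rpow_natCast, norm_mul, norm_pow, norm_pow]
      ring
    set ξ : H := b.repr.symm ⟨g, hgmem⟩ with hξ_def
    have hξcoeff : ∀ p : ℕ × ℕ, p ≠ (0,0) → ⟪ξ, v p⟫ = w₁ ^ p.1 * w₂ ^ p.2 := by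
      intro p hp
      have h1 : b.repr ξ = ⟨g, hgmem⟩ := b.repr.apply_symm_apply _
      have h2 := b.repr_apply_apply ξ ⟨p, hp⟩
      rw [h1] at h2
      have hb : b ⟨p, hp⟩ = v p := by
        rw [show (b : {p : ℕ × ℕ // p ≠ (0,0)} → H)
          = fun q : {p : ℕ × ℕ // p ≠ (0,0)} => v q.1 from HilbertBasis.coe_mk _ _]
      rw [hb] at h2
      have h3 : ⟪v p, ξ⟫ = g ⟨p, hp⟩ := h2.symm
      rw [← inner_conj_symm, h3, hg_def]
      simp
    have hξmem : ξ ∈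
        (LinearMap.ker ((ContinuousLinearMap.adjoint (M₁ - w₁ • (1 : H →L[ℂ] H))) : H →ₗ[ℂ] H) ⊓
          LinearMap.ker ((ContinuousLinearMap.adjoint (M₂ - w₂ • (1 : H →L[ℂ] H))) : H →ₗ[ℂ] H) :
          Submodule ℂ H) := by
      rw [Submodule.mem_inf, hker₁, hker₂]
      constructor
      · intro p hp
        rw [hξcoeff p hp, hξcoeff (p.1 + 1, p.2) (by simp)]
        ring
      · intro p hp
        rw [hξcoeff p hp, hξcoeff (p.1, p.2 + 1) (by simp)]
        ring
    have hξne : ξ ≠ 0 := by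
      intro hzero
      rcases hw with hw | hw
      · have := hξcoeff (1, 0) (by simp)
        rw [hzero] at this
        simp at this
        exact hw this.symm
      · have := hξcoeff (0, 1) (by simp)
        rw [hzero] at this
        simp at this
        exact hw this.symm
    have hKeq :
        (LinearMap.ker ((ContinuousLinearMap.adjoint (M₁ - w₁ • (1 : H →L[ℂ] H))) : H →ₗ[ℂ] H) ⊓
          LinearMap.ker ((ContinuousLinearMap.adjoint (M₂ - w₂ • (1 : H →L[ℂ] H))) : H →ₗ[ℂ] H) :
          Submodule ℂ H) = ℂ ∙ ξ := by
      apply le_antisymm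
      · intro x hx
        obtain ⟨hx1, hx2⟩ := Submodule.mem_inf.mp hx
        rw [hker₁] at hx1
        rw [hker₂] at hx2
        obtain ⟨t, ht1, ht2⟩ := aux_t w₁ w₂ hw (fun p => ⟪x, v p⟫) hx1 hx2
        have hc := aux_coeff w₁ w₂ t (fun p => ⟪x, v p⟫) hx1 hx2 ht1 ht2
        have hzero : x - (starRingEnd ℂ) t • ξ = 0 := by
          apply aux_eq_zero v hdense
          intro p hp
          rw [inner_sub_left, inner_smul_left, hξcoeff p hp]
          have := hc p hp
          rw [this]
          simp only [RingHomCompTriple.comp_apply, RingHom.id_apply,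
            starRingEnd_self_apply]
          ring
        rw [Submodule.mem_span_singleton]
        exact ⟨(starRingEnd ℂ) t, (sub_eq_zero.mp hzero).symm⟩
      · rw [Submodule.span_singleton_le_iff_mem]
        exact hξmem
    rw [hKeq]
    exact finrank_span_singleton hξne
  · -- case w = (0,0)
    intro h0
    have hw1 : w₁ = 0 := congrArg Prod.fst h0
    have hw2 : w₂ = 0 := congrArg Prod.snd h0
    subst hw1; subst hw2
    have hKeq :
        (LinearMap.ker ((ContinuousLinearMap.adjoint (M₁ - (0:ℂ) • (1 : H →L[ℂ] H))) : H →ₗ[ℂ] H) ⊓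
          LinearMap.ker ((ContinuousLinearMap.adjoint (M₂ - (0:ℂ) • (1 : H →L[ℂ] H))) : H →ₗ[ℂ] H) :
          Submodule ℂ H) = Submodule.span ℂ {v (1, 0), v (0, 1)} := by
      apply le_antisymm
      · intro x hx
        obtain ⟨hx1, hx2⟩ := Submodule.mem_inf.mp hx
        rw [hker₁] at hx1
        rw [hker₂] at hx2
        have hx1' : ∀ p : ℕ × ℕ, p ≠ (0,0) → ⟪x, v (p.1 + 1, p.2)⟫ = 0 := by
          intro p hp; rw [hx1 p hp, zero_mul]
        have hx2' : ∀ p : ℕ × ℕ, p ≠ (0,0) → ⟪x, v (p.1, p.2 + 1)⟫ = 0 := by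
          intro p hp; rw [hx2 p hp, zero_mul]
        have hcoeff : ∀ p : ℕ × ℕ, p ≠ (0,0) → p ≠ (1,0) → p ≠ (0,1) → ⟪x, v p⟫ = 0 := by
          rintro ⟨m, n⟩ hp hp1 hp2
          match m, n with
          | 0, 0 => exact absurd rfl hp
          | 1, 0 => exact absurd rfl hp1
          | 0, 1 => exact absurd rfl hp2
          | 0, (n + 2) => exact hx2' (0, n + 1) (by simp)
          | 1, (n + 1) => exact hx1' (0, n + 1) (by simp)
          | (m + 2), n => exact hx1' (m + 1, n) (by simp)
        have hzero :
            x - (⟪v (1,0), x⟫ • v (1,0) + ⟪v (0,1), x⟫ • v (0,1)) = 0 := by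
          apply aux_eq_zero v hdense
          intro p hp
          rw [inner_sub_left, inner_add_left, inner_smul_left, inner_smul_left,
            hv_inner (1,0) p (by simp) hp, hv_inner (0,1) p (by simp) hp]
          by_cases hp1 : p = (1,0)
          · subst hp1
            simp [inner_conj_symm]
          · by_cases hp2 : p = (0,1)
            · subst hp2
              simp [inner_conj_symm]
            · rw [if_neg (fun h => hp1 h.symm), if_neg (fun h => hp2 h.symm),
                mul_zero, mul_zero, add_zero, sub_zero]
              exact hcoeff p hp hp1 hp2
        have hx_eq : x = ⟪v (1,0), x⟫ • v (1,0) + ⟪v (0,1), x⟫ • v (0,1) :=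
          sub_eq_zero.mp hzero
        rw [Submodule.mem_span_pair]
        exact ⟨_, _, hx_eq.symm⟩
      · rw [Submodule.span_le]
        rintro z hz
        simp only [Set.mem_insert_iff, Set.mem_singleton_iff] at hz
        have hmem10 : v (1,0) ∈
            (LinearMap.ker ((ContinuousLinearMap.adjoint (M₁ - (0:ℂ) • (1 : H →L[ℂ] H))) : H →ₗ[ℂ] H) ⊓
              LinearMap.ker ((ContinuousLinearMap.adjoint (M₂ - (0:ℂ) • (1 : H →L[ℂ] H))) : H →ₗ[ℂ] H) :
              Submodule ℂ H) := by
          rw [Submodule.mem_inf, hker₁, hker₂]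
          refine ⟨fun p hp => ?_, fun p hp => ?_⟩
          · rw [zero_mul, hv_inner (1,0) (p.1+1,p.2) (by simp) (by simp), if_neg]
            intro h
            apply hp
            have h1 := congrArg Prod.fst h
            have h2 := congrArg Prod.snd h
            simp only at h1 h2
            exact Prod.ext_iff.mpr ⟨by omega, by omega⟩
          · rw [zero_mul, hv_inner (1,0) (p.1,p.2+1) (by simp) (by simp), if_neg]
            intro h
            have h2 := congrArg Prod.snd h
            simp only at h2
            omega
        have hmem01 : v (0,1) ∈
            (LinearMap.ker ((ContinuousLinearMap.adjoint (M₁ - (0:ℂ) • (1 : H →L[ℂ] H))) : H →ₗ[ℂ] H) ⊓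
              LinearMap.ker ((ContinuousLinearMap.adjoint (M₂ - (0:ℂ) • (1 : H →L[ℂ] H))) : H →ₗ[ℂ] H) :
              Submodule ℂ H) := by
          rw [Submodule.mem_inf, hker₁, hker₂]
          refine ⟨fun p hp => ?_, fun p hp => ?_⟩
          · rw [zero_mul, hv_inner (0,1) (p.1+1,p.2) (by simp) (by simp), if_neg]
            intro h
            have h1 := congrArg Prod.fst h
            simp only at h1
            omega
          · rw [zero_mul, hv_inner (0,1) (p.1,p.2+1) (by simp) (by simp), if_neg]
            intro h
            apply hp
            have h1 := congrArg Prod.fst h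
            have h2 := congrArg Prod.snd h
            simp only at h1 h2
            exact Prod.ext_iff.mpr ⟨by omega, by omega⟩
        rcases hz with hz | hz <;> rw [hz]
        · exact hmem10
        · exact hmem01
    refine ⟨hKeq, ?_⟩
    rw [hKeq]
    -- the span of two orthonormal vectors has dimension 2
    let f : Fin 2 → H := ![v (1,0), v (0,1)]
    have horth2 : Orthonormal ℂ f := by
      rw [orthonormal_iff_ite]
      intro i j
      fin_cases i <;> fin_cases j <;>
        simp only [f, Fin.zero_eta, Fin.mk_one, Matrix.cons_val_zero,
          Matrix.cons_val_one, Matrix.head_cons] <;>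
        rw [hv_inner _ _ (by simp) (by simp)] <;>
        norm_num [Prod.ext_iff]
    have hrange2 : Set.range f = {v (1,0), v (0,1)} := by
      ext y
      simp only [Set.mem_range, Set.mem_insert_iff, Set.mem_singleton_iff]
      constructor
      · rintro ⟨i, rfl⟩
        fin_cases i
        · left; rfl
        · right; rfl
      · rintro (rfl | rfl)
        · exact ⟨0, rfl⟩
        · exact ⟨1, rfl⟩
    rw [← hrange2, finrank_span_eq_card horth2.linearIndependent]
    simp
end
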